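/- arXiv:1312.1717 — 10 statements merged into one kernel-verified Lean document; each statement's English description precedes it below -/
import Mathlib

section
/- Let G and U be closed subspaces of a Hilbert space H with cos(φ_{GU}) > 0. Then the subspace P_U(G) = {P_U g : g ∈ G} is closed in H. -/
open Submodule

/-- `cos(φ_{GU}) = inf over unit vectors g ∈ G of ‖P_U g‖`. -/
noncomputable def cosAngle {H : Type*} [NormedAddCommGroup H] [InnerProductSpace ℝ H]
    (S V : Submodule ℝ H) [CompleteSpace V] : ℝ :=
  sInf {r : ℝ | ∃ s ∈ S, ‖s‖ = 1 ∧ r = ‖(orthogonalProjection V s : H)‖}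

/-- If `cos(φ_{GU}) > 0` then `P_U(G) = {P_U g : g ∈ G}` is closed. -/
theorem stmt2 {H : Type*} [NormedAddCommGroup H] [InnerProductSpace ℝ H] [CompleteSpace H]
    (G U : Submodule ℝ H) [CompleteSpace G] [CompleteSpace U]
    (hcos : 0 < cosAngle G U) :
    IsClosed ((G.map ((U.subtypeL.comp (orthogonalProjection U)).toLinearMap) :
      Submodule ℝ H) : Set H) := by
  set c := cosAngle G U with hc
  set f : H →L[ℝ] H := U.subtypeL.comp (orthogonalProjection U) with hf
  -- lower bound for all g ∈ G
  have key : ∀ g : G, c * ‖(g : H)‖ ≤ ‖f (g : H)‖ := by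
    intro g
    rcases eq_or_ne (g : H) 0 with h0 | h0
    · simp [h0]
    · have hn : ‖(g : H)‖ ≠ 0 := norm_ne_zero_iff.mpr h0
      have hnpos : 0 < ‖(g : H)‖ := norm_pos_iff.mpr h0
      have hmem : (‖(g : H)‖⁻¹ : ℝ) • (g : H) ∈ G := G.smul_mem _ g.2
      have hunit : ‖(‖(g : H)‖⁻¹ : ℝ) • (g : H)‖ = 1 := by
        rw [norm_smul, norm_inv, norm_norm, inv_mul_cancel₀ hn]
      have hbdd : BddBelow {r : ℝ | ∃ s ∈ G, ‖s‖ = 1 ∧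
          r = ‖(orthogonalProjection U s : H)‖} := by
        refine ⟨0, ?_⟩
        rintro r ⟨s, _, _, rfl⟩
        exact norm_nonneg _
      have hle : c ≤ ‖(orthogonalProjection U ((‖(g : H)‖⁻¹ : ℝ) • (g : H)) : H)‖ :=
        csInf_le hbdd ⟨_, hmem, hunit, rfl⟩
      have heq : ‖(orthogonalProjection U ((‖(g : H)‖⁻¹ : ℝ) • (g : H)) : H)‖
          = ‖(g : H)‖⁻¹ * ‖(orthogonalProjection U (g : H) : H)‖ := by
        rw [map_smul]
        simp [norm_smul, abs_of_nonneg (inv_nonneg.mpr (norm_nonneg _))]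
      rw [heq] at hle
      have : c * ‖(g : H)‖ ≤ ‖(orthogonalProjection U (g : H) : H)‖ := by
        rw [mul_comm]
        exact (le_inv_mul_iff₀ hnpos).mp (by linarith [hle]) |>.trans_eq rfl
      simpa [hf] using this
  -- T : G →L H
  set T : G →L[ℝ] H := f.comp G.subtypeL with hT
  have hanti : AntilipschitzWith (⟨c, le_of_lt hcos⟩ : NNReal)⁻¹ T := by
    apply ContinuousLinearMap.antilipschitz_of_bound
    intro x
    have := key x
    show ‖(x:H)‖ ≤ c⁻¹ * ‖T x‖
    show ‖(x:H)‖ ≤ c⁻¹ * ‖T x‖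
    rw [le_inv_mul_iff₀ hcos]
    simpa [hT] using this
  have hclosed : IsClosed (Set.range T) :=
    hanti.isClosed_range T.uniformContinuous
  have hset : ((G.map f.toLinearMap : Submodule ℝ H) : Set H) = Set.range T := by
    ext x
    simp only [Submodule.map_coe, Set.mem_image, Set.mem_range]
    constructor
    · rintro ⟨g, hg, rfl⟩; exact ⟨⟨g, hg⟩, rfl⟩
    · rintro ⟨g, rfl⟩; exact ⟨g, g.2, rfl⟩
  rw [hset]
  exact hclosed
end

section
/- Let G and U be closed subspaces of a Hilbert space H with cos(φ_{GU}) > 0. Then cos(φ_{G, P_U(G)}) = cos(φ_{GU}), where P_U(G) = {P_U g : g ∈ G}. -/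
open Submodule

/-- If `cos(φ_{GU}) > 0`, then `cos(φ_{G, P_U(G)}) = cos(φ_{GU})`. -/
theorem stmt3 {H : Type*} [NormedAddCommGroup H] [InnerProductSpace ℝ H] [CompleteSpace H]
    (G U : Submodule ℝ H) [CompleteSpace G] [CompleteSpace U]
    [CompleteSpace (G.map ((U.subtypeL.comp (orthogonalProjection U)).toLinearMap))]
    (hcos : 0 < cosAngle G U) :
    cosAngle G (G.map ((U.subtypeL.comp (orthogonalProjection U)).toLinearMap)) =
      cosAngle G U := by
  set W := G.map ((U.subtypeL.comp (orthogonalProjection U)).toLinearMap) with hW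
  have hWU : W ≤ U := by
    rintro x ⟨g, _, rfl⟩
    exact (orthogonalProjection U g).2
  have key : ∀ s ∈ G, (orthogonalProjection W s : H) = (orthogonalProjection U s : H) := by
    intro s hs
    apply eq_starProjection_of_mem_orthogonal
    · exact ⟨s, hs, rfl⟩
    · exact Submodule.orthogonal_le hWU (sub_starProjection_mem_orthogonal s)
  unfold cosAngle
  congr 1
  ext r
  constructor
  · rintro ⟨s, hs, h1, rfl⟩
    exact ⟨s, hs, h1, by rw [key s hs]⟩
  · rintro ⟨s, hs, h1, rfl⟩
    exact ⟨s, hs, h1, by rw [key s hs]⟩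
end

section
/- Let G and U be closed subspaces of a Hilbert space H with cos(φ_{GU}) > 0. Then H = G ⊕ P_U(G)^⊥ (direct sum), and the oblique projection P_{G, P_U(G)^⊥} : H → G with range G and kernel P_U(G)^⊥ is well defined and bounded. -/
open Submodule

open scoped RealInnerProductSpace

set_option maxHeartbeats 1000000 in
/-- If `cos(φ_{GU}) > 0`, then `H = G ⊕ P_U(G)^⊥` and the oblique projection with range `G`
and kernel `P_U(G)^⊥` is well defined and bounded. -/
theorem stmt4 {H : Type*} [NormedAddCommGroup H] [InnerProductSpace ℝ H] [CompleteSpace H]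
    (G U : Submodule ℝ H) [CompleteSpace G] [CompleteSpace U]
    (hcos : 0 < cosAngle G U) :
    G ⊓ (G.map ((U.subtypeL.comp (orthogonalProjection U)).toLinearMap))ᗮ = ⊥ ∧
    G ⊔ (G.map ((U.subtypeL.comp (orthogonalProjection U)).toLinearMap))ᗮ = ⊤ ∧
    ∃ P : H →L[ℝ] H,
      LinearMap.range (P : H →ₗ[ℝ] H) = G ∧
      LinearMap.ker (P : H →ₗ[ℝ] H) = (G.map ((U.subtypeL.comp (orthogonalProjection U)).toLinearMap))ᗮ ∧
      ∀ g ∈ G, P g = g := by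
  classical
  set c := cosAngle G U with hc
  set Pu : H →L[ℝ] H := U.subtypeL.comp (orthogonalProjection U) with hPuDef
  have hPuapp : ∀ x : H, Pu x = (orthogonalProjection U x : H) := fun x => rfl
  -- the lower bound from the cosine of the angle
  have hlb : ∀ g ∈ G, c * ‖g‖ ≤ ‖Pu g‖ := by
    intro g hg
    rcases eq_or_ne g 0 with rfl | hg0
    · simp
    · have hgp : (0:ℝ) < ‖g‖ := norm_pos_iff.mpr hg0
      have h1 : ‖(‖g‖⁻¹ • g)‖ = 1 := by
        rw [norm_smul, norm_inv, norm_norm, inv_mul_cancel₀ hgp.ne']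
      have hmem : ‖g‖⁻¹ • g ∈ G := G.smul_mem _ hg
      have hle : c ≤ ‖Pu (‖g‖⁻¹ • g)‖ := by
        rw [hc, cosAngle]
        apply csInf_le
        · refine ⟨0, ?_⟩
          rintro r ⟨s, _, _, rfl⟩
          positivity
        · exact ⟨_, hmem, h1, rfl⟩
      rw [map_smul, norm_smul, norm_inv, norm_norm] at hle
      calc c * ‖g‖ ≤ (‖g‖⁻¹ * ‖Pu g‖) * ‖g‖ := by nlinarith
        _ = ‖Pu g‖ := by field_simp
  -- the bilinear form
  set T : G →L[ℝ] H := Pu.comp G.subtypeL with hT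
  set B : G →L[ℝ] G →L[ℝ] ℝ := (innerSL ℝ (E := H)).bilinearComp T T with hB
  have hBapp : ∀ x y : G, B x y = ⟪Pu (x : H), Pu (y : H)⟫ := fun x y => rfl
  have hPuPu : ∀ x y : H, ⟪Pu x, Pu y⟫ = ⟪Pu x, y⟫ := by
    intro x y
    show ⟪((orthogonalProjection U x : H)), ((orthogonalProjection U y : H))⟫ =
      ⟪((orthogonalProjection U x : H)), y⟫
    rw [real_inner_comm, show ∀ u v : H, ⟪(orthogonalProjection U u : H), v⟫ =
        ⟪u, (orthogonalProjection U v : H)⟫ from inner_starProjection_left_eq_right U,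
      orthogonalProjection_mem_subspace_eq_self]
    exact real_inner_comm _ _
  have hcoer : IsCoercive B := by
    refine ⟨c * c, mul_pos hcos hcos, ?_⟩
    intro u
    have h1 : c * ‖(u:H)‖ ≤ ‖Pu (u:H)‖ := hlb _ u.2
    have h2 : B u u = ‖Pu (u:H)‖ ^ 2 := by
      rw [hBapp]; exact real_inner_self_eq_norm_sq _
    have hn : ‖u‖ = ‖(u:H)‖ := rfl
    rw [h2, hn]
    nlinarith [_root_.mul_le_mul h1 h1 (mul_nonneg hcos.le (norm_nonneg (u:H))) (norm_nonneg (Pu (u:H))), norm_nonneg (u:H), norm_nonneg (Pu (u:H)), hcos.le]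
  set E := hcoer.continuousLinearEquivOfBilin with hE
  set P : H →L[ℝ] H :=
    G.subtypeL.comp ((E.symm : G →L[ℝ] G).comp ((orthogonalProjection G).comp Pu)) with hP
  have hPapp : ∀ h : H, P h = ((E.symm (orthogonalProjection G (Pu h)) : G) : H) :=
    fun h => rfl
  have hPmem : ∀ h : H, P h ∈ G := fun h => Submodule.coe_mem _
  -- P is the identity on G
  have hPid : ∀ g ∈ G, P g = g := by
    intro g hg
    have key : E ⟨g, hg⟩ = orthogonalProjection G (Pu g) := by
      apply ext_inner_right ℝ
      intro w
      calc ⟪E ⟨g, hg⟩, w⟫ = B ⟨g, hg⟩ w := hcoer.continuousLinearEquivOfBilin_apply _ _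
        _ = ⟪Pu g, (w:H)⟫ := by rw [hBapp]; exact hPuPu _ _
        _ = ⟪orthogonalProjection G (Pu g), w⟫ :=
            (inner_orthogonalProjection_eq_of_mem_right w (Pu g)).symm
    have : P g = ((E.symm (E ⟨g, hg⟩) : G) : H) := by rw [hPapp, key]
    rw [this, ContinuousLinearEquiv.symm_apply_apply]
  -- h - P h is in the orthogonal complement of Pu(G)
  have hker : ∀ h : H, h - P h ∈ (G.map Pu.toLinearMap)ᗮ := by
    intro h
    rw [Submodule.mem_orthogonal]
    rintro _ ⟨g, hg, rfl⟩
    show ⟪Pu g, h - P h⟫ = 0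
    rw [inner_sub_right, sub_eq_zero]
    calc ⟪Pu g, h⟫ = ⟪g, Pu h⟫ := inner_starProjection_left_eq_right U g h
      _ = ⟪Pu h, g⟫ := real_inner_comm _ _
      _ = ⟪orthogonalProjection G (Pu h), (⟨g, hg⟩ : G)⟫ :=
          (inner_orthogonalProjection_eq_of_mem_right (⟨g, hg⟩ : G) (Pu h)).symm
      _ = ⟪E (E.symm (orthogonalProjection G (Pu h))), (⟨g, hg⟩ : G)⟫ := by
          rw [ContinuousLinearEquiv.apply_symm_apply]
      _ = B (E.symm (orthogonalProjection G (Pu h))) ⟨g, hg⟩ :=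
          hcoer.continuousLinearEquivOfBilin_apply _ _
      _ = ⟪Pu (P h), Pu g⟫ := by rw [hBapp, hPapp]
      _ = ⟪Pu (P h), g⟫ := hPuPu _ _
      _ = ⟪P h, Pu g⟫ := inner_starProjection_left_eq_right U (P h) g
      _ = ⟪Pu g, P h⟫ := real_inner_comm _ _
  -- trivial intersection
  have hinf : G ⊓ (G.map Pu.toLinearMap)ᗮ = ⊥ := by
    rw [eq_bot_iff]
    intro x hx
    obtain ⟨hxG, hxO⟩ := Submodule.mem_inf.mp hx
    have h0 : ⟪Pu x, x⟫ = 0 := Submodule.mem_orthogonal _ x |>.mp hxO _ ⟨x, hxG, rfl⟩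
    have h1 : ‖Pu x‖ ^ 2 = 0 := by
      rw [← real_inner_self_eq_norm_sq, hPuPu, h0]
    have h2 : ‖Pu x‖ = 0 := by
      have := sq_eq_zero_iff.mp h1; exact this
    have h3 : c * ‖x‖ ≤ 0 := by have h5 := hlb x hxG; rw [h2] at h5; exact h5
    have h4 : ‖x‖ ≤ 0 := by nlinarith [norm_nonneg x]
    have hx0 : x = 0 := norm_le_zero_iff.mp h4
    rw [hx0]; exact Submodule.zero_mem ⊥
  refine ⟨hinf, ?_, P, ?_, ?_, hPid⟩
  · rw [eq_top_iff]
    intro h _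
    have := Submodule.add_mem (G ⊔ (G.map Pu.toLinearMap)ᗮ)
      (Submodule.mem_sup_left (hPmem h)) (Submodule.mem_sup_right (hker h))
    simpa using this
  · apply le_antisymm
    · rintro _ ⟨h, rfl⟩; exact hPmem h
    · intro g hg
      exact ⟨g, hPid g hg⟩
  · ext h
    simp only [LinearMap.mem_ker, ContinuousLinearMap.coe_coe]
    constructor
    · intro h0
      have := hker h
      rwa [h0, sub_zero] at this
    · intro hmem
      have hPhO : P h ∈ (G.map Pu.toLinearMap)ᗮ := by
        have : P h = h - (h - P h) := (sub_sub_cancel h (P h)).symm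
        rw [this]
        exact Submodule.sub_mem _ hmem (hker h)
      have : P h ∈ G ⊓ (G.map Pu.toLinearMap)ᗮ := ⟨hPmem h, hPhO⟩
      rw [hinf] at this
      simpa using this
end

section
/- Let G and U be closed subspaces of H with cos(φ_{GU}) > 0. Let P denote the oblique projection with range G and kernel P_U(G)^⊥. Then ‖P‖ = 1/cos(φ_{GU}), and for all f ∈ H, ‖f − P_G f‖ ≤ ‖f − P f‖ ≤ (1/cos(φ_{GU})) ‖f − P_G f‖. -/
open Submodule

open RealInnerProductSpace

/-- If `cos(φ_{GU}) > 0` and `P` is the oblique projection with range `G` and kernel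
`P_U(G)^⊥`, then `‖P‖ = 1/cos(φ_{GU})` and
`‖f − P_G f‖ ≤ ‖f − P f‖ ≤ (1/cos(φ_{GU})) ‖f − P_G f‖` for all `f`. -/
theorem stmt5 {H : Type*} [NormedAddCommGroup H] [InnerProductSpace ℝ H] [CompleteSpace H]
    (G U : Submodule ℝ H) [CompleteSpace G] [CompleteSpace U]
    (hcos : 0 < cosAngle G U)
    (P : H →L[ℝ] H)
    (hrange : LinearMap.range (P : H →ₗ[ℝ] H) = G)
    (hker : LinearMap.ker (P : H →ₗ[ℝ] H) = (G.map ((U.subtypeL.comp (orthogonalProjection U)).toLinearMap))ᗮ)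
    (hfix : ∀ g ∈ G, P g = g) :
    ‖P‖ = 1 / cosAngle G U ∧
    ∀ f : H, ‖f - (orthogonalProjection G f : H)‖ ≤ ‖f - P f‖ ∧
      ‖f - P f‖ ≤ (1 / cosAngle G U) * ‖f - (orthogonalProjection G f : H)‖ := by
  classical
  set c : ℝ := cosAngle G U with hc
  set S : Set ℝ := {r : ℝ | ∃ s ∈ G, ‖s‖ = 1 ∧ r = ‖(orthogonalProjection U s : H)‖} with hS
  have hcS : c = sInf S := rfl
  -- S is nonempty (otherwise c = 0)
  have hSne : S.Nonempty := by
    by_contra hne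
    rw [Set.not_nonempty_iff_eq_empty] at hne
    rw [hcS, hne, Real.sInf_empty] at hcos
    exact lt_irrefl 0 hcos
  have hSbdd : BddBelow S := by
    refine ⟨0, fun r hr => ?_⟩
    obtain ⟨s, hsG, hs1, rfl⟩ := hr
    positivity
  have hcle : ∀ r ∈ S, c ≤ r := fun r hr => hcS ▸ csInf_le hSbdd hr
  -- basic: ‖P_U x‖ ≤ ‖x‖
  have hPUle : ∀ x : H, ‖(orthogonalProjection U x : H)‖ ≤ ‖x‖ := by
    intro x
    calc ‖(orthogonalProjection U x : H)‖ = ‖orthogonalProjection U x‖ := rfl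
      _ ≤ ‖orthogonalProjection U‖ * ‖x‖ := (orthogonalProjection U).le_opNorm x
      _ ≤ 1 * ‖x‖ := by
          have := orthogonalProjection_norm_le U
          have h0 : (0:ℝ) ≤ ‖x‖ := norm_nonneg x
          nlinarith
      _ = ‖x‖ := one_mul _
  have hcone : c ≤ 1 := by
    obtain ⟨r, hr⟩ := hSne
    obtain ⟨s, hsG, hs1, rfl⟩ := hr
    exact le_trans (hcle _ ⟨s, hsG, hs1, rfl⟩) (by rw [← hs1]; exact hPUle s)
  have h1c2 : (0:ℝ) ≤ 1 - c ^ 2 := by nlinarith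
  -- homogeneous bound: c * ‖g‖ ≤ ‖P_U g‖ for g ∈ G
  have hcA : ∀ g ∈ G, c * ‖g‖ ≤ ‖(orthogonalProjection U g : H)‖ := by
    intro g hg
    rcases eq_or_ne g 0 with rfl | hg0
    · simp
    · have hng : (0:ℝ) < ‖g‖ := norm_pos_iff.mpr hg0
      have hsG : (‖g‖⁻¹ • g) ∈ G := G.smul_mem _ hg
      have hs1 : ‖‖g‖⁻¹ • g‖ = 1 := by
        rw [norm_smul, norm_inv, norm_norm, inv_mul_cancel₀ hng.ne']
      have hmem : ‖(orthogonalProjection U (‖g‖⁻¹ • g) : H)‖ ∈ S := ⟨_, hsG, hs1, rfl⟩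
      have := hcle _ hmem
      rw [map_smul] at this
      have hcoe : ((‖g‖⁻¹ • orthogonalProjection U g : U) : H)
          = ‖g‖⁻¹ • ((orthogonalProjection U g : H)) := rfl
      rw [hcoe, norm_smul, norm_inv, norm_norm] at this
      rw [mul_comm]
      calc ‖g‖ * c ≤ ‖g‖ * (‖g‖⁻¹ * ‖(orthogonalProjection U g : H)‖) := by
            exact mul_le_mul_of_nonneg_left this hng.le
        _ = ‖(orthogonalProjection U g : H)‖ := by field_simp
  -- membership in the kernel
  have hker' : ∀ k : H, P k = 0 → ∀ g ∈ G, ⟪(orthogonalProjection U g : H), k⟫ = 0 := by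
    intro k hk g hg
    have hkmem : k ∈ LinearMap.ker (P : H →ₗ[ℝ] H) := by
      simpa [LinearMap.mem_ker] using hk
    rw [hker] at hkmem
    exact hkmem _ ⟨g, hg, rfl⟩
  have hkerin : ∀ g ∈ G, P (g - (orthogonalProjection U g : H)) = 0 := by
    intro g hg
    have : g - (orthogonalProjection U g : H) ∈ LinearMap.ker (P : H →ₗ[ℝ] H) := by
      rw [hker]
      intro v hv
      obtain ⟨g', hg', rfl⟩ := hv
      show ⟪(orthogonalProjection U g' : H), g - (orthogonalProjection U g : H)⟫ = 0
      rw [real_inner_comm]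
      exact starProjection_inner_eq_zero (K := U) g _ (Submodule.coe_mem _)
    simpa [LinearMap.mem_ker] using this
  -- ⟪P_U g, g⟫ = ‖P_U g‖²
  have hinsq : ∀ g : H, ⟪(orthogonalProjection U g : H), g⟫
      = ‖(orthogonalProjection U g : H)‖ ^ 2 := by
    intro g
    have h0 : ⟪g - (orthogonalProjection U g : H), (orthogonalProjection U g : H)⟫ = 0 :=
      starProjection_inner_eq_zero (K := U) g _ (Submodule.coe_mem _)
    rw [inner_sub_left] at h0
    have := real_inner_self_eq_norm_sq ((orthogonalProjection U g : H))
    rw [real_inner_comm]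
    linarith
  -- Fact 1 : c * ‖P f‖ ≤ ‖f‖
  have fact1 : ∀ f : H, c * ‖P f‖ ≤ ‖f‖ := by
    intro f
    set g : H := P f with hg
    have hgG : g ∈ G := hrange ▸ LinearMap.mem_range_self (P : H →ₗ[ℝ] H) f
    have hk0 : P (f - g) = 0 := by
      rw [map_sub, hfix g hgG, hg, sub_self]
    set u : H := (orthogonalProjection U g : H) with hu
    have hperp : ⟪u, f - g⟫ = 0 := hker' _ hk0 g hgG
    have h2 : ⟪u, f⟫ = ‖u‖ ^ 2 := by
      have h2a : ⟪u, f⟫ = ⟪u, g⟫ + ⟪u, f - g⟫ := by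
        rw [← inner_add_right, add_sub_cancel]
      rw [h2a, hperp, add_zero, hu, hinsq]
    have hCS : ⟪u, f⟫ ≤ ‖u‖ * ‖f‖ := real_inner_le_norm u f
    have hcg : c * ‖g‖ ≤ ‖u‖ := hcA g hgG
    nlinarith [norm_nonneg u, norm_nonneg f, norm_nonneg g]
  -- Fact 2 : for h ⊥ G,  c * ‖h - P h‖ ≤ ‖h‖
  have fact2 : ∀ h ∈ Gᗮ, c * ‖h - P h‖ ≤ ‖h‖ := by
    intro h hh
    set g : H := P h with hg
    have hgG : g ∈ G := hrange ▸ LinearMap.mem_range_self (P : H →ₗ[ℝ] H) h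
    set k : H := h - g with hk
    have hk0 : P k = 0 := by rw [hk, map_sub, hfix g hgG, hg, sub_self]
    set u : H := (orthogonalProjection U g : H) with hu
    have hperp : ⟪u, k⟫ = 0 := hker' _ hk0 g hgG
    have hperp' : ⟪k, u⟫ = 0 := by rw [real_inner_comm]; exact hperp
    have hgh : ⟪g, h⟫ = 0 := hh g hgG
    set a : ℝ := ‖g‖ with hA
    set b : ℝ := ‖k‖ with hB
    set s : ℝ := ‖g - u‖ with hsdef
    have ha0 : (0:ℝ) ≤ a := norm_nonneg _
    have hb0 : (0:ℝ) ≤ b := norm_nonneg _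
    have hs0 : (0:ℝ) ≤ s := norm_nonneg _
    have ha2 : a ^ 2 ≤ s * b := by
      have h1 : ⟪g, k⟫ = ⟪g - u, k⟫ := by
        rw [inner_sub_left, hperp, sub_zero]
      have h2 : ⟪g, h⟫ = ⟪g, g⟫ + ⟪g, k⟫ := by
        rw [← inner_add_right, hk, add_sub_cancel]
      have h3 : a ^ 2 = -⟪g - u, k⟫ := by
        have := real_inner_self_eq_norm_sq g
        rw [hgh] at h2
        rw [← h1]
        linarith
      have h4 : |⟪g - u, k⟫| ≤ s * b := abs_real_inner_le_norm _ _
      calc a^2 = -⟪g - u, k⟫ := h3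
        _ ≤ |⟪g - u, k⟫| := neg_le_abs _
        _ ≤ s * b := h4
    have hs2 : s ^ 2 ≤ (1 - c ^ 2) * a ^ 2 := by
      have hpyth : a ^ 2 = s ^ 2 + ‖u‖ ^ 2 := by
        have h0 : ⟪g - u, u⟫ = 0 :=
          starProjection_inner_eq_zero (K := U) g _ (Submodule.coe_mem _)
        have := norm_add_sq_real (g - u) u
        simp only [sub_add_cancel] at this
        rw [h0] at this
        simpa using this
      have hcg : c * a ≤ ‖u‖ := hcA g hgG
      have hprod : 0 ≤ (‖u‖ - c * a) * (‖u‖ + c * a) :=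
        mul_nonneg (by linarith) (by positivity)
      nlinarith
    have hb2 : b ^ 2 ≤ ‖h‖ ^ 2 + s * b := by
      have h1 : ⟪k, h⟫ = ‖h‖ ^ 2 := by
        have h1a : ⟪k, h⟫ = ⟪h, h⟫ - ⟪g, h⟫ := by
          rw [hk, inner_sub_left]
        rw [h1a, hgh, sub_zero, real_inner_self_eq_norm_sq]
      have h2 : b ^ 2 = ⟪k, h⟫ - ⟪k, g⟫ := by
        have h2a : ⟪k, k⟫ = ⟪k, h⟫ - ⟪k, g⟫ := by
          rw [← inner_sub_right]
        rw [← h2a, real_inner_self_eq_norm_sq]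
      have h3 : ⟪k, g⟫ = ⟪k, g - u⟫ := by
        rw [inner_sub_right, hperp', sub_zero]
      have h4 : |⟪k, g - u⟫| ≤ b * s := abs_real_inner_le_norm _ _
      have h5 : -(s * b) ≤ ⟪k, g - u⟫ := by
        have := neg_abs_le ⟪k, g - u⟫
        nlinarith
      rw [h2, h1, h3]
      linarith
    -- combine: s * b ≤ (1 - c²) * b²
    have hsb : s * b ≤ (1 - c ^ 2) * b ^ 2 := by
      rcases eq_or_lt_of_le hs0 with hs | hs
      · rw [← hs, zero_mul]
        positivity
      · have hss : s * s ≤ s * ((1 - c ^ 2) * b) := by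
          have h6 : (1 - c ^ 2) * a ^ 2 ≤ (1 - c ^ 2) * (s * b) :=
            mul_le_mul_of_nonneg_left ha2 h1c2
          calc s * s = s ^ 2 := by ring
            _ ≤ (1 - c ^ 2) * (s * b) := le_trans hs2 h6
            _ = s * ((1 - c ^ 2) * b) := by ring
        have hsle : s ≤ (1 - c ^ 2) * b := le_of_mul_le_mul_left hss hs
        calc s * b ≤ ((1 - c ^ 2) * b) * b := mul_le_mul_of_nonneg_right hsle hb0
          _ = (1 - c ^ 2) * b ^ 2 := by ring
    have hcb : c ^ 2 * b ^ 2 ≤ ‖h‖ ^ 2 := by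
      have hring : (1 - c ^ 2) * b ^ 2 = b ^ 2 - c ^ 2 * b ^ 2 := by ring
      linarith
    have hfin : c * b ≤ ‖h‖ := by
      have hsq : (c * b) ^ 2 ≤ ‖h‖ ^ 2 := by
        calc (c * b) ^ 2 = c ^ 2 * b ^ 2 := by ring
          _ ≤ ‖h‖ ^ 2 := hcb
      exact le_of_pow_le_pow_left₀ two_ne_zero (norm_nonneg h) hsq
    simpa [hk] using hfin
  -- Norm bounds
  have hnorm_le : ‖P‖ ≤ 1 / c := by
    refine P.opNorm_le_bound (by positivity) fun f => ?_
    rw [div_mul_eq_mul_div, one_mul, le_div_iff₀ hcos, mul_comm]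
    exact fact1 f
  obtain ⟨r0, s0, hs0G, hs01, hr0⟩ := hSne
  have hP1 : 1 ≤ ‖P‖ := by
    have := P.le_opNorm s0
    rw [hfix s0 hs0G, hs01, mul_one] at this
    linarith
  have hPpos : (0:ℝ) < ‖P‖ := lt_of_lt_of_le one_pos hP1
  have hlower : ∀ r ∈ S, 1 / ‖P‖ ≤ r := by
    intro r hr
    obtain ⟨s, hsG, hs1, rfl⟩ := hr
    set u : H := (orthogonalProjection U s : H) with hu
    have hPu : P u = s := by
      have h1 : P (s - u) = 0 := hkerin s hsG
      have h3 : P s - P u = 0 := by rw [← map_sub]; exact h1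
      have h4 : P s = P u := sub_eq_zero.mp h3
      rw [← h4, hfix s hsG]
    have hle := P.le_opNorm u
    rw [hPu, hs1] at hle
    rw [div_le_iff₀ hPpos, mul_comm]
    exact hle
  have h1c : 1 / ‖P‖ ≤ c := hcS ▸ le_csInf ⟨r0, s0, hs0G, hs01, hr0⟩ hlower
  have hnorm_ge : 1 / c ≤ ‖P‖ := by
    rw [div_le_iff₀ hPpos] at h1c
    rw [div_le_iff₀ hcos]
    nlinarith
  have hnorm : ‖P‖ = 1 / c := le_antisymm hnorm_le hnorm_ge
  refine ⟨hnorm, fun f => ?_⟩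
  set q : H := (orthogonalProjection G f : H) with hq
  have hqG : q ∈ G := Submodule.coe_mem _
  have hfq : f - q ∈ Gᗮ := sub_starProjection_mem_orthogonal (K := G) f
  have hPfG : P f ∈ G := hrange ▸ LinearMap.mem_range_self (P : H →ₗ[ℝ] H) f
  constructor
  · -- Pythagoras
    have horth : ⟪f - q, q - P f⟫ = 0 := by
      rw [real_inner_comm]; exact hfq _ (G.sub_mem hqG hPfG)
    have hdecomp : f - P f = (f - q) + (q - P f) := by abel
    have hpy := norm_add_sq_real (f - q) (q - P f)
    rw [horth] at hpy
    rw [hdecomp]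
    have hsq : ‖f - q‖ ^ 2 ≤ ‖(f - q) + (q - P f)‖ ^ 2 := by nlinarith [sq_nonneg ‖q - P f‖]
    exact le_of_pow_le_pow_left₀ two_ne_zero (norm_nonneg _) hsq
  · have hkey : f - P f = (f - q) - P (f - q) := by
      have hPq : P (f - q) = P f - q := by rw [map_sub, hfix q hqG]
      rw [hPq]; abel
    rw [hkey]
    have := fact2 (f - q) hfq
    rw [div_mul_eq_mul_div, one_mul, le_div_iff₀ hcos, mul_comm]
    exact this
end

section
/- Let S and W be closed subspaces of a Hilbert space H with cos(φ_{S,W⊥}) > 0, and let H₁ = S ⊕ W. If P_{SW} : H₁ → S is the oblique projection with range S and kernel W, then ‖P_{SW}‖ = 1/cos(φ_{S,W⊥}) and ‖f − P_S f‖ ≤ ‖f − P_{SW} f‖ ≤ (1/cos(φ_{S,W⊥})) ‖f − P_S f‖ for all f ∈ H₁. -/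
open Submodule InnerProductSpace

section Aux

variable {H : Type*} [NormedAddCommGroup H] [InnerProductSpace ℝ H] [CompleteSpace H]
  (S W : Submodule ℝ H) [CompleteSpace S] [CompleteSpace W]

lemma cosAngle_bddBelow :
    BddBelow {r : ℝ | ∃ s ∈ S, ‖s‖ = 1 ∧ r = ‖(orthogonalProjection Wᗮ s : H)‖} := by
  refine ⟨0, ?_⟩
  rintro r ⟨t, ht, h1, rfl⟩
  positivity

lemma cosAngle_le {s : H} (hs : s ∈ S) (h1 : ‖s‖ = 1) :
    cosAngle S Wᗮ ≤ ‖(orthogonalProjection Wᗮ s : H)‖ :=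
  csInf_le (cosAngle_bddBelow S W) ⟨s, hs, h1, rfl⟩

lemma exists_unit (hcos : 0 < cosAngle S Wᗮ) : ∃ s ∈ S, ‖s‖ = 1 := by
  by_contra h
  push_neg at h
  have he : {r : ℝ | ∃ s ∈ S, ‖s‖ = 1 ∧ r = ‖(orthogonalProjection Wᗮ s : H)‖} = ∅ := by
    ext r; simp only [Set.mem_setOf_eq, Set.mem_empty_iff_false, iff_false]
    rintro ⟨t, ht, h1, rfl⟩
    exact h t ht h1
  rw [cosAngle, he, Real.sInf_empty] at hcos
  exact lt_irrefl 0 hcos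

lemma pythagoras (v : H) :
    ‖(orthogonalProjection W v : H)‖ ^ 2 + ‖(orthogonalProjection Wᗮ v : H)‖ ^ 2 = ‖v‖ ^ 2 := by
  have h : ⟪v - (orthogonalProjection W v : H), (orthogonalProjection W v : H)⟫_ℝ = 0 :=
    starProjection_inner_eq_zero (K := W) v (orthogonalProjection W v) (by simp)
  have h0 : ⟪(orthogonalProjection W v : H), v - orthogonalProjection W v⟫_ℝ = 0 := by
    rw [real_inner_comm]; exact h
  have hsum : (orthogonalProjection W v : H) + (v - orthogonalProjection W v) = v := by abel
  have hexp := norm_add_sq_real (orthogonalProjection W v : H) (v - orthogonalProjection W v)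
  rw [hsum, h0] at hexp
  rw [show (orthogonalProjection Wᗮ v : H) = v - orthogonalProjection W v from
    starProjection_orthogonal_val (K := W) v]
  linarith

lemma cosAngle_le_one (hcos : 0 < cosAngle S Wᗮ) : cosAngle S Wᗮ ≤ 1 := by
  obtain ⟨s, hs, h1⟩ := exists_unit S W hcos
  refine (cosAngle_le S W hs h1).trans ?_
  have := pythagoras W s
  nlinarith [norm_nonneg ((orthogonalProjection W s : H)),
    norm_nonneg ((orthogonalProjection Wᗮ s : H))]

/-- key inner product bound -/
lemma inner_bound (hcos : 0 < cosAngle S Wᗮ) {s w : H} (hs : s ∈ S) (hw : w ∈ W) :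
    |⟪s, w⟫_ℝ| ≤ Real.sqrt (1 - cosAngle S Wᗮ ^ 2) * ‖s‖ * ‖w‖ := by
  set c := cosAngle S Wᗮ with hc
  rcases eq_or_ne s 0 with rfl | hs0
  · simp
  have key : ∀ t : H, t ∈ S → ‖t‖ = 1 → |⟪t, w⟫_ℝ| ≤ Real.sqrt (1 - c ^ 2) * ‖w‖ := by
    intro t ht h1
    have horth : ⟪t - orthogonalProjection W t, w⟫_ℝ = 0 := by
      rw [real_inner_comm]
      exact (sub_starProjection_mem_orthogonal (K := W) t) w hw
    have h2 : ⟪t, w⟫_ℝ = ⟪(orthogonalProjection W t : H), w⟫_ℝ := by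
      have hsub := inner_sub_left (𝕜 := ℝ) t (orthogonalProjection W t : H) w
      rw [horth] at hsub
      linarith
    have hle : c ≤ ‖(orthogonalProjection Wᗮ t : H)‖ := cosAngle_le S W ht h1
    have hpy := pythagoras W t
    have hsq : ‖(orthogonalProjection W t : H)‖ ^ 2 ≤ 1 - c ^ 2 := by
      nlinarith [norm_nonneg ((orthogonalProjection Wᗮ t : H))]
    have hn : ‖(orthogonalProjection W t : H)‖ ≤ Real.sqrt (1 - c ^ 2) := by
      have hss := Real.sqrt_le_sqrt hsq
      rwa [Real.sqrt_sq (norm_nonneg _)] at hss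
    calc |⟪t, w⟫_ℝ| = |⟪(orthogonalProjection W t : H), w⟫_ℝ| := by rw [h2]
      _ ≤ ‖(orthogonalProjection W t : H)‖ * ‖w‖ := abs_real_inner_le_norm _ _
      _ ≤ Real.sqrt (1 - c ^ 2) * ‖w‖ := mul_le_mul_of_nonneg_right hn (norm_nonneg _)
  have hns : (0 : ℝ) < ‖s‖ := norm_pos_iff.mpr hs0
  have hkey := key (‖s‖⁻¹ • s) (S.smul_mem _ hs) (by
    rw [norm_smul, norm_inv, norm_norm, inv_mul_cancel₀ hns.ne'])
  rw [real_inner_smul_left, abs_mul, abs_inv, abs_norm] at hkey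
  calc |⟪s, w⟫_ℝ| = ‖s‖ * (‖s‖⁻¹ * |⟪s, w⟫_ℝ|) := by field_simp
    _ ≤ ‖s‖ * (Real.sqrt (1 - c ^ 2) * ‖w‖) := mul_le_mul_of_nonneg_left hkey hns.le
    _ = Real.sqrt (1 - c ^ 2) * ‖s‖ * ‖w‖ := by ring

/-- key norm bounds -/
lemma norm_bound (hcos : 0 < cosAngle S Wᗮ) {s w : H} (hs : s ∈ S) (hw : w ∈ W) :
    cosAngle S Wᗮ * ‖s‖ ≤ ‖s + w‖ ∧ cosAngle S Wᗮ * ‖w‖ ≤ ‖s + w‖ := by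
  set c := cosAngle S Wᗮ with hc
  have hc1 : c ≤ 1 := cosAngle_le_one S W hcos
  have hib := inner_bound S W hcos hs hw
  have hexp : ‖s + w‖ ^ 2 = ‖s‖ ^ 2 + 2 * ⟪s, w⟫_ℝ + ‖w‖ ^ 2 := norm_add_sq_real s w
  set σ := Real.sqrt (1 - c ^ 2) with hσ
  have hσ2 : σ ^ 2 = 1 - c ^ 2 := Real.sq_sqrt (by nlinarith)
  have hσ0 : 0 ≤ σ := Real.sqrt_nonneg _
  have habs := abs_le.mp hib
  obtain ⟨habs1, habs2⟩ := habs
  have ha : (0:ℝ) ≤ ‖s‖ := norm_nonneg _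
  have hb : (0:ℝ) ≤ ‖w‖ := norm_nonneg _
  have hn : (0:ℝ) ≤ ‖s + w‖ := norm_nonneg _
  constructor
  · nlinarith [sq_nonneg (‖w‖ - σ * ‖s‖), sq_nonneg (‖s + w‖ - c * ‖s‖),
      mul_nonneg (mul_nonneg hcos.le ha) hn]
  · nlinarith [sq_nonneg (‖s‖ - σ * ‖w‖), sq_nonneg (‖s + w‖ - c * ‖w‖),
      mul_nonneg (mul_nonneg hcos.le hb) hn]

end Aux

/-- If `cos(φ_{S,W⊥}) > 0` and `P_{SW} : H₁ = S ⊕ W → S` is the oblique projection with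
range `S` and kernel `W` (`s + w ↦ s`), then `‖P_{SW}‖ = 1/cos(φ_{S,W⊥})` and
`‖f − P_S f‖ ≤ ‖f − P_{SW} f‖ ≤ (1/cos(φ_{S,W⊥})) ‖f − P_S f‖` for `f ∈ H₁`. -/
theorem stmt6 {H : Type*} [NormedAddCommGroup H] [InnerProductSpace ℝ H] [CompleteSpace H]
    (S W : Submodule ℝ H) [CompleteSpace S] [CompleteSpace W]
    (hcos : 0 < cosAngle S Wᗮ)
    (P : (S ⊔ W : Submodule ℝ H) →L[ℝ] H)
    (hP : ∀ (x : (S ⊔ W : Submodule ℝ H)) (s w : H), s ∈ S → w ∈ W →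
      (x : H) = s + w → P x = s) :
    ‖P‖ = 1 / cosAngle S Wᗮ ∧
    ∀ f : (S ⊔ W : Submodule ℝ H),
      ‖(f : H) - (orthogonalProjection S (f : H) : H)‖ ≤ ‖(f : H) - P f‖ ∧
      ‖(f : H) - P f‖ ≤ (1 / cosAngle S Wᗮ) * ‖(f : H) - (orthogonalProjection S (f : H) : H)‖ := by
  set c := cosAngle S Wᗮ with hc
  have hnorm_le : ‖P‖ ≤ 1 / c := by
    apply ContinuousLinearMap.opNorm_le_bound _ (by positivity)
    intro x
    obtain ⟨s, hs, w, hw, hx⟩ := mem_sup.mp x.2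
    rw [hP x s w hs hw hx.symm]
    have hb := (norm_bound S W hcos hs hw).1
    rw [hx] at hb
    rw [show ‖x‖ = ‖(x : H)‖ from rfl, div_mul_eq_mul_div, le_div_iff₀ hcos]
    linarith
  constructor
  · refine le_antisymm hnorm_le ?_
    obtain ⟨s₀, hs₀, h₀⟩ := exists_unit S W hcos
    have hmem₀ : s₀ ∈ S ⊔ W := mem_sup_left hs₀
    have hP₀ : P ⟨s₀, hmem₀⟩ = s₀ := hP _ s₀ 0 hs₀ (zero_mem W) (by simp)
    have hPpos : 0 < ‖P‖ := by
      by_contra h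
      push_neg at h
      have hle := P.le_opNorm ⟨s₀, hmem₀⟩
      rw [hP₀, h₀] at hle
      nlinarith [norm_nonneg (⟨s₀, hmem₀⟩ : (S ⊔ W : Submodule ℝ H))]
    have hkey : 1 / ‖P‖ ≤ c := by
      refine le_csInf ⟨_, ⟨s₀, hs₀, h₀, rfl⟩⟩ ?_
      rintro r ⟨t, ht, h1, rfl⟩
      have hmem : t - (orthogonalProjection W t : H) ∈ S ⊔ W :=
        Submodule.sub_mem _ (mem_sup_left ht) (mem_sup_right (orthogonalProjection W t).2)
      have hPt : P ⟨t - (orthogonalProjection W t : H), hmem⟩ = t :=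
        hP _ t (-(orthogonalProjection W t : H)) ht
          (W.neg_mem (orthogonalProjection W t).2) (by simp [sub_eq_add_neg])
      have hle : 1 ≤ ‖P‖ * ‖(orthogonalProjection Wᗮ t : H)‖ := by
        have := P.le_opNorm ⟨t - (orthogonalProjection W t : H), hmem⟩
        rw [hPt, h1] at this
        rwa [show ‖(⟨t - (orthogonalProjection W t : H), hmem⟩ :
            (S ⊔ W : Submodule ℝ H))‖ = ‖t - (orthogonalProjection W t : H)‖ from rfl,
          ← show (orthogonalProjection Wᗮ t : H) = t - orthogonalProjection W t from
            starProjection_orthogonal_val (K := W) t] at this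
      rw [div_le_iff₀ hPpos]
      nlinarith
    rw [div_le_iff₀ hcos]
    have := (div_le_iff₀ hPpos).mp hkey
    linarith
  · intro f
    obtain ⟨s, hs, w, hw, hx⟩ := mem_sup.mp f.2
    have hPf : P f = s := hP f s w hs hw hx.symm
    have hfw : (f : H) - P f = w := by rw [hPf, ← hx]; abel
    constructor
    · rw [hfw]
      have hmin : ‖(f : H) - (orthogonalProjection S (f : H) : H)‖ = ⨅ x : S, ‖(f : H) - x‖ :=
        starProjection_minimal (U := S) (f : H)
      rw [hmin]
      have hb : BddBelow (Set.range fun x : S => ‖(f : H) - x‖) := by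
        refine ⟨0, ?_⟩
        rintro r ⟨x, rfl⟩
        positivity
      have := ciInf_le hb (⟨s, hs⟩ : S)
      simp only at this
      calc ⨅ x : S, ‖(f : H) - x‖ ≤ ‖(f : H) - s‖ := this
        _ = ‖w‖ := by rw [← hx]; congr 1; abel
    · rw [hfw]
      have hsub : s - (orthogonalProjection S (f : H) : H) ∈ S :=
        S.sub_mem hs (orthogonalProjection S (f : H)).2
      have hb := (norm_bound S W hcos hsub hw).2
      have heq : s - (orthogonalProjection S (f : H) : H) + w
          = (f : H) - (orthogonalProjection S (f : H) : H) := by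
        rw [← hx]; abel
      rw [heq] at hb
      rw [div_mul_eq_mul_div, le_div_iff₀ hcos]
      linarith
end

section
/- Let {u_j} be a frame sequence in a Hilbert space H with closed span U, and let {g_k} be a Riesz sequence in H with closed span G. Then G ∩ U^⊥ = {0} if and only if the operator 𝒰*𝒢 : ℓ² → ℓ² is injective, where 𝒰 and 𝒢 are the synthesis operators of {u_j} and {g_k}. -/
open Submodule RealInnerProductSpace

/-- Let `{u_j}` be a frame sequence with synthesis operator `𝒰` and closed span `U`, and
`{g_k}` a Riesz sequence with synthesis operator `𝒢` and closed span `G`. Then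
`G ∩ U^⊥ = {0}` iff `𝒰*𝒢` is injective. -/
theorem stmt7 {H : Type*} [NormedAddCommGroup H] [InnerProductSpace ℝ H] [CompleteSpace H]
    (u g : ℕ → H)
    (𝒰 𝒢 : lp (fun _ : ℕ => ℝ) 2 →L[ℝ] H)
    (h𝒰 : ∀ (f : H) (j : ℕ), (𝒰.adjoint f : ∀ _ : ℕ, ℝ) j = ⟪f, u j⟫)
    (h𝒢 : ∀ (f : H) (k : ℕ), (𝒢.adjoint f : ∀ _ : ℕ, ℝ) k = ⟪f, g k⟫)
    (U G : Submodule ℝ H)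
    (hU : U = (LinearMap.range (𝒰 : lp (fun _ : ℕ => ℝ) 2 →ₗ[ℝ] H)).topologicalClosure)
    (hG : G = (LinearMap.range (𝒢 : lp (fun _ : ℕ => ℝ) 2 →ₗ[ℝ] H)).topologicalClosure)
    -- `{u_j}` is a frame for `U`:
    (A B : ℝ) (hA : 0 < A)
    (hframe : ∀ f ∈ U, A * ‖f‖ ^ 2 ≤ ‖𝒰.adjoint f‖ ^ 2 ∧ ‖𝒰.adjoint f‖ ^ 2 ≤ B * ‖f‖ ^ 2)
    -- `{g_k}` is a Riesz sequence (synthesis operator bounded below):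
    (c : ℝ) (hc : 0 < c)
    (hRiesz : ∀ a : lp (fun _ : ℕ => ℝ) 2, c * ‖a‖ ≤ ‖𝒢 a‖) :
    G ⊓ Uᗮ = ⊥ ↔ Function.Injective (𝒰.adjoint.comp 𝒢) := by
  -- `𝒢` is injective
  have h𝒢inj : ∀ a : lp (fun _ : ℕ => ℝ) 2, 𝒢 a = 0 → a = 0 := by
    intro a ha
    have := hRiesz a
    rw [ha, norm_zero] at this
    have : ‖a‖ ≤ 0 := by nlinarith [norm_nonneg a]
    simpa using le_antisymm this (norm_nonneg a)
  -- `𝒢` has closed range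
  have hGrange : G = LinearMap.range (𝒢 : lp (fun _ : ℕ => ℝ) 2 →ₗ[ℝ] H) := by
    rw [hG]
    apply ContinuousLinearMap.closed_range_of_antilipschitz (c := (Real.toNNReal c)⁻¹)
    apply 𝒢.antilipschitz_of_bound
    intro x
    rw [NNReal.coe_inv, Real.coe_toNNReal _ hc.le, ← div_eq_inv_mul, le_div_iff₀ hc, mul_comm]
    exact hRiesz x
  -- characterization of the kernel of `𝒰.adjoint`
  have hker : ∀ f : H, 𝒰.adjoint f = 0 ↔ f ∈ Uᗮ := by
    intro f
    constructor
    · intro hf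
      rw [hU, ← Submodule.orthogonal_orthogonal_eq_closure,
        Submodule.triorthogonal_eq_orthogonal]
      intro x hx
      obtain ⟨a, rfl⟩ := hx
      rw [ContinuousLinearMap.coe_coe, real_inner_comm, ← ContinuousLinearMap.adjoint_inner_left, hf,
        inner_zero_left]
    · intro hf
      have : ⟪𝒰.adjoint f, 𝒰.adjoint f⟫ = 0 := by
        rw [ContinuousLinearMap.adjoint_inner_right]
        apply Submodule.mem_orthogonal U f |>.mp hf
        rw [hU]
        exact Submodule.le_topologicalClosure _ (LinearMap.mem_range_self _ _)
      exact inner_self_eq_zero.mp this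
  constructor
  · intro h a b hab
    have h0 : 𝒰.adjoint.comp 𝒢 (a - b) = 0 := by
      rw [map_sub, hab, sub_self]
    have : 𝒢 (a - b) ∈ G ⊓ Uᗮ := by
      refine ⟨?_, (hker _).mp h0⟩
      rw [hGrange]; exact LinearMap.mem_range_self _ _
    rw [h, Submodule.mem_bot] at this
    have := h𝒢inj _ this
    exact sub_eq_zero.mp this
  · intro hinj
    rw [Submodule.eq_bot_iff]
    rintro x ⟨hxG, hxU⟩
    rw [hGrange] at hxG
    obtain ⟨a, rfl⟩ := hxG
    have : 𝒰.adjoint.comp 𝒢 a = 𝒰.adjoint.comp 𝒢 0 := by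
      simp only [ContinuousLinearMap.comp_apply, map_zero]
      exact (hker _).mpr hxU
    rw [hinj this, map_zero]
end

section
/- Let 𝒰 : ℓ²(ℕ) → H be a bounded operator with closed range, and suppose (𝒰*𝒰)† and (𝒰𝒰*)† exist as bounded operators. Then (𝒰*𝒰)^{†/2} 𝒰* = 𝒰* (𝒰𝒰*)^{†/2}, where A^{†/2} denotes the unique positive square root of the positive operator A†. -/
open Submodule ContinuousLinearMap

open scoped RealInnerProductSpace
set_option maxHeartbeats 1000000
set_option synthInstance.maxHeartbeats 1000000

section AuxLemmas

variable {E F : Type*} [NormedAddCommGroup E] [InnerProductSpace ℝ E] [CompleteSpace E]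
  [NormedAddCommGroup F] [InnerProductSpace ℝ F] [CompleteSpace F]

lemma isPositive_iff_real (T : E →L[ℝ] E) :
    T.IsPositive ↔ IsSelfAdjoint T ∧ ∀ x, 0 ≤ ⟪T x, x⟫ :=
  ⟨fun h => ⟨h.isSelfAdjoint, h.inner_nonneg_left⟩,
    fun h => isPositive_def'.mpr ⟨h.1, fun x => by simpa [reApplyInnerSelf] using h.2 x⟩⟩

lemma selfAdj_inner_left {T : E →L[ℝ] E} (hT : IsSelfAdjoint T) (x y : E) :
    ⟪T x, y⟫ = ⟪x, T y⟫ := by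
  rw [← hT.adjoint_eq, adjoint_inner_left, hT.adjoint_eq]

/-- Cauchy–Schwarz style: positive operator with vanishing quadratic form at `u` kills `u`. -/
lemma pos_apply_eq_zero_of_inner_self {T : E →L[ℝ] E} (hT : T.IsPositive) {u : E}
    (hu : ⟪T u, u⟫ = 0) : T u = 0 := by
  have key : ∀ v, ⟪T u, v⟫ = 0 := by
    intro v
    set b := ⟪T v, v⟫ with hbdef
    set c := ⟪T u, v⟫ with hcdef
    have hb : 0 ≤ b := by simpa using hT.inner_nonneg_left v
    have hsymm : ⟪T v, u⟫ = c := by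
      rw [selfAdj_inner_left hT.isSelfAdjoint, real_inner_comm]
    have hquad : ∀ t : ℝ, 0 ≤ 2 * t * c + t ^ 2 * b := by
      intro t
      have h0 : 0 ≤ ⟪T (u + t • v), u + t • v⟫ := by simpa using hT.inner_nonneg_left (u + t • v)
      calc (0:ℝ) ≤ ⟪T (u + t • v), u + t • v⟫ := h0
        _ = 2 * t * c + t ^ 2 * b := by
            simp only [map_add, map_smul, inner_add_left, inner_add_right, inner_smul_left,
              inner_smul_right, hu, hsymm, starRingEnd_apply, star_trivial]
            rw [← hcdef, ← hbdef]
            ring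
    have hb1 : (0:ℝ) < b + 1 := by linarith
    have := hquad (-(c / (b + 1)))
    have hc2 : c ^ 2 ≤ 0 := by
      have hexp : 2 * -(c / (b + 1)) * c + (-(c / (b + 1))) ^ 2 * b
          = -(c ^ 2 * (b + 2)) / (b + 1) ^ 2 := by
        field_simp
        ring
      rw [hexp] at this
      have h3 : (0:ℝ) < (b + 1) ^ 2 := by positivity
      have h4 := mul_nonneg this h3.le
      rw [div_mul_cancel₀ _ (ne_of_gt h3)] at h4
      nlinarith [h4, hb]
    have : c ^ 2 = 0 := le_antisymm hc2 (sq_nonneg c)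
    exact pow_eq_zero_iff (two_ne_zero) |>.mp this
  have := key (T u)
  exact inner_self_eq_zero.mp this

/-- If a continuous linear map vanishes on the kernel and the range of a selfadjoint operator,
it vanishes. -/
lemma ext_zero_of_selfAdjoint {B : E →L[ℝ] E} (hB : IsSelfAdjoint B) (Δ : E →L[ℝ] F)
    (h1 : ∀ y, B y = 0 → Δ y = 0) (h2 : ∀ z, Δ (B z) = 0) : Δ = 0 := by
  have hker : LinearMap.ker (B : E →ₗ[ℝ] E) = (LinearMap.range (B : E →ₗ[ℝ] E))ᗮ := by
    ext x
    constructor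
    · intro hx
      intro u hu
      obtain ⟨z, rfl⟩ := hu
      change ⟪B z, x⟫ = 0
      have hx' : B x = 0 := LinearMap.mem_ker.mp hx
      rw [selfAdj_inner_left hB, hx', inner_zero_right]
    · intro hx
      rw [LinearMap.mem_ker]
      have h := hx (B (B x)) ⟨B x, rfl⟩
      rw [selfAdj_inner_left hB] at h
      exact inner_self_eq_zero.mp (by rw [real_inner_comm]; exact h)
  have horth : (LinearMap.ker (B : E →ₗ[ℝ] E))ᗮ ≤ LinearMap.ker (Δ : E →ₗ[ℝ] F) := by
    rw [hker, Submodule.orthogonal_orthogonal_eq_closure]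
    apply Submodule.topologicalClosure_minimal
    · rintro _ ⟨z, rfl⟩
      exact LinearMap.mem_ker.mpr (h2 z)
    · exact ContinuousLinearMap.isClosed_ker Δ
  have : CompleteSpace (LinearMap.ker (B : E →ₗ[ℝ] E)) :=
    (ContinuousLinearMap.isClosed_ker B).completeSpace_coe
  ext y
  have hy : y ∈ (⊤ : Submodule ℝ E) := trivial
  rw [← Submodule.sup_orthogonal_of_hasOrthogonalProjection (K := LinearMap.ker (B : E →ₗ[ℝ] E))] at hy
  obtain ⟨a, ha, b, hb, rfl⟩ := Submodule.mem_sup.mp hy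
  have hΔb : Δ b = 0 := horth hb
  have hΔa : Δ a = 0 := h1 a (LinearMap.mem_ker.mp ha)
  simp [hΔa, hΔb]

lemma sq_isPositive {S : E →L[ℝ] E} (hS : IsSelfAdjoint S) : (S ∘L S).IsPositive := by
  have h := isPositive_adjoint_comp_self S
  simpa [hS.adjoint_eq] using h

lemma one_sub_isPositive {B : E →L[ℝ] E} (hB : B.IsPositive) (hn : ‖B‖ ≤ 1) :
    ((1 : E →L[ℝ] E) - B).IsPositive := by
  rw [isPositive_iff_real]
  refine ⟨(IsSelfAdjoint.one (R := E →L[ℝ] E)).sub hB.isSelfAdjoint, fun x => ?_⟩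
  have h1 : ⟪B x, x⟫ ≤ ‖x‖ * ‖x‖ := by
    calc ⟪B x, x⟫ ≤ ‖B x‖ * ‖x‖ := real_inner_le_norm _ _
      _ ≤ (‖B‖ * ‖x‖) * ‖x‖ := by
          have := B.le_opNorm x
          exact mul_le_mul_of_nonneg_right this (norm_nonneg _)
      _ ≤ ‖x‖ * ‖x‖ := by nlinarith [norm_nonneg x, norm_nonneg B]
  have h2 : ⟪x, x⟫ = ‖x‖ * ‖x‖ := real_inner_self_eq_norm_mul_norm x
  simp only [sub_apply, one_apply, inner_sub_left]
  linarith [show ⟪(1 : E →L[ℝ] E) x, x⟫ = ⟪x, x⟫ from rfl]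

lemma inner_mul_nonneg_of_norm_le_one {B T : E →L[ℝ] E} (hB : B.IsPositive) (hn : ‖B‖ ≤ 1)
    (hT : T.IsPositive) (hc : B * T = T * B) (x : E) : 0 ≤ ⟪B (T x), x⟫ := by
  classical
  let C : ℕ → E →L[ℝ] E := fun n => Nat.rec B (fun _ c => c - c * c) n
  have hC0 : C 0 = B := rfl
  have hCs : ∀ n, C (n + 1) = C n - C n * C n := fun n => rfl
  have hpos : ∀ n, (C n).IsPositive ∧ ((1 : E →L[ℝ] E) - C n).IsPositive := by
    intro n
    induction n with
    | zero => exact ⟨hB, one_sub_isPositive hB hn⟩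
    | succ n ih =>
      obtain ⟨ha, hb⟩ := ih
      set a := C n with hadef
      have p1 : (a ∘L (((1 : E →L[ℝ] E) - a) ∘L a)).IsPositive := by
        have h := hb.conj_adjoint a
        rwa [ha.isSelfAdjoint.adjoint_eq] at h
      have p2 : (((1 : E →L[ℝ] E) - a) ∘L (a ∘L ((1 : E →L[ℝ] E) - a))).IsPositive := by
        have h := ha.conj_adjoint ((1 : E →L[ℝ] E) - a)
        rwa [hb.isSelfAdjoint.adjoint_eq] at h
      constructor
      · rw [hCs n, ← hadef]
        have e1 : a - a * a
            = a ∘L (((1 : E →L[ℝ] E) - a) ∘L a) + ((1 : E →L[ℝ] E) - a) ∘L (a ∘L ((1 : E →L[ℝ] E) - a)) := by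
          simp only [← ContinuousLinearMap.mul_def]
          noncomm_ring
        rw [e1]
        exact p1.add p2
      · rw [hCs n, ← hadef]
        have e2 : (1 : E →L[ℝ] E) - (a - a * a) = ((1 : E →L[ℝ] E) - a) + a ∘L a := by
          simp only [← ContinuousLinearMap.mul_def]
          noncomm_ring
        rw [e2]
        exact hb.add (sq_isPositive ha.isSelfAdjoint)
  have hcomm : ∀ n, Commute (C n) T := by
    intro n
    induction n with
    | zero => exact hc
    | succ n ih => exact ih.sub_left (ih.mul_left ih)
  have hsum : ∀ n, (∑ k ∈ Finset.range n, C k * C k) + C n = B := by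
    intro n
    induction n with
    | zero => simp [hC0]
    | succ n ih =>
      rw [Finset.sum_range_succ, hCs n]
      calc (∑ k ∈ Finset.range n, C k * C k) + C n * C n + (C n - C n * C n)
          = (∑ k ∈ Finset.range n, C k * C k) + C n := by abel
        _ = B := ih
  -- apply to vectors and inner products
  set y := T x with hy
  have happ : ∀ n (z : E), B z = (∑ k ∈ Finset.range n, C k ((C k) z)) + C n z := by
    intro n z
    conv_lhs => rw [← hsum n]
    rw [add_apply, sum_apply]
    simp [mul_apply]
  have key1 : ∀ n, ⟪B y, x⟫ = (∑ k ∈ Finset.range n, ⟪T (C k x), C k x⟫) + ⟪C n y, x⟫ := by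
    intro n
    rw [happ n y, inner_add_left, sum_inner]
    congr 1
    apply Finset.sum_congr rfl
    intro k _
    have hck : C k y = T (C k x) := by
      have := congrArg (fun (S : E →L[ℝ] E) => S x) (hcomm k).eq
      simpa [mul_apply, hy] using this
    rw [hck, selfAdj_inner_left (hpos k).1.isSelfAdjoint]
  have key2 : ∀ n, ⟪C n y, x⟫ ≤ ⟪B y, x⟫ := by
    intro n
    rw [key1 n]
    have hnn : 0 ≤ ∑ k ∈ Finset.range n, ⟪T (C k x), C k x⟫ :=
      Finset.sum_nonneg fun k _ => hT.2 (C k x)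
    linarith
  -- the remainder term tends to zero
  have hsum_y : ∀ n, (∑ k ∈ Finset.range n, ⟪C k y, C k y⟫) ≤ ⟪B y, y⟫ := by
    intro n
    have h := happ n y
    have : ⟪B y, y⟫ = (∑ k ∈ Finset.range n, ⟪C k y, C k y⟫) + ⟪C n y, y⟫ := by
      rw [h, inner_add_left, sum_inner]
      congr 1
      exact Finset.sum_congr rfl fun k _ => selfAdj_inner_left (hpos k).1.isSelfAdjoint _ _
    have hlast : (0:ℝ) ≤ ⟪C n y, y⟫ := by simpa using (hpos n).1.inner_nonneg_left y
    linarith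
  have hsummable : Summable (fun k => ⟪C k y, C k y⟫) :=
    summable_of_sum_range_le (fun k => real_inner_self_nonneg) hsum_y
  have htend0 : Filter.Tendsto (fun n => ⟪C n y, C n y⟫) Filter.atTop (nhds 0) :=
    hsummable.tendsto_atTop_zero
  have htendnorm : Filter.Tendsto (fun n => ‖C n y‖) Filter.atTop (nhds 0) := by
    have h1 : Filter.Tendsto (fun n => Real.sqrt ⟪C n y, C n y⟫) Filter.atTop (nhds 0) := by
      simpa using htend0.sqrt
    have h2 : (fun n => Real.sqrt ⟪C n y, C n y⟫) = fun n => ‖C n y‖ := by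
      funext n
      rw [real_inner_self_eq_norm_sq, Real.sqrt_sq (norm_nonneg _)]
    rwa [h2] at h1
  have htendinner : Filter.Tendsto (fun n => ⟪C n y, x⟫) Filter.atTop (nhds 0) := by
    apply squeeze_zero_norm (fun n => abs_real_inner_le_norm (C n y) x)
    simpa using htendnorm.mul_const ‖x‖
  exact le_of_tendsto htendinner (Filter.Eventually.of_forall key2)

/-- Product of commuting positive operators has nonnegative quadratic form. -/
lemma inner_mul_comm_pos_nonneg {B T : E →L[ℝ] E} (hB : B.IsPositive) (hT : T.IsPositive)
    (hc : B * T = T * B) (x : E) : 0 ≤ ⟪B (T x), x⟫ := by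
  by_cases hB0 : B = 0
  · simp [hB0]
  have hr : 0 < ‖B‖ := norm_pos_iff.mpr hB0
  set B' := ‖B‖⁻¹ • B with hB'def
  have hB'pos : B'.IsPositive := by
    rw [isPositive_iff_real]
    constructor
    · rw [hB'def, IsSelfAdjoint, star_smul, star_trivial, hB.isSelfAdjoint.star_eq]
    · intro z
      have := hB.2 z
      simp only [reApplyInnerSelf] at this
      simp only [hB'def, coe_smul', Pi.smul_apply, real_inner_smul_left]
      positivity
  have hB'n : ‖B'‖ ≤ 1 := by
    rw [hB'def, norm_smul ‖B‖⁻¹ B]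
    simp [abs_of_nonneg (inv_nonneg.mpr hr.le), inv_mul_cancel₀ (ne_of_gt hr)]
  have hc' : B' * T = T * B' := by
    rw [hB'def, smul_mul_assoc, mul_smul_comm, hc]
  have h := inner_mul_nonneg_of_norm_le_one hB'pos hB'n hT hc' x
  have hEq : ⟪B (T x), x⟫ = ‖B‖ * ⟪B' (T x), x⟫ := by
    simp only [hB'def, coe_smul', Pi.smul_apply, real_inner_smul_left]
    rw [← mul_assoc, mul_inv_cancel₀ (ne_of_gt hr), one_mul]
  rw [hEq]
  exact mul_nonneg hr.le h

end AuxLemmas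

/-- For a bounded closed-range operator `𝒰 : ℓ² → H`, with `S₁ = (𝒰*𝒰)†`, `S₂ = (𝒰𝒰*)†`
(Moore–Penrose pseudoinverses) and `T₁ = S₁^{1/2}`, `T₂ = S₂^{1/2}` their unique positive
square roots, one has `(𝒰*𝒰)^{†/2} 𝒰* = 𝒰* (𝒰𝒰*)^{†/2}`. -/
theorem stmt14 {H : Type*} [NormedAddCommGroup H] [InnerProductSpace ℝ H] [CompleteSpace H]
    (𝒰 : lp (fun _ : ℕ => ℝ) 2 →L[ℝ] H)
    (hcr : IsClosed ((LinearMap.range (𝒰 : lp (fun _ : ℕ => ℝ) 2 →ₗ[ℝ] H) : Submodule ℝ H) : Set H))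
    (S₁ : lp (fun _ : ℕ => ℝ) 2 →L[ℝ] lp (fun _ : ℕ => ℝ) 2)
    (hS₁ker : LinearMap.ker (S₁ : lp (fun _ : ℕ => ℝ) 2 →ₗ[ℝ] lp (fun _ : ℕ => ℝ) 2) = (LinearMap.range ((𝒰.adjoint.comp 𝒰 : lp (fun _ : ℕ => ℝ) 2 →L[ℝ] lp (fun _ : ℕ => ℝ) 2) : lp (fun _ : ℕ => ℝ) 2 →ₗ[ℝ] lp (fun _ : ℕ => ℝ) 2))ᗮ)
    (hS₁ran : LinearMap.range (S₁ : lp (fun _ : ℕ => ℝ) 2 →ₗ[ℝ] lp (fun _ : ℕ => ℝ) 2) = (LinearMap.ker ((𝒰.adjoint.comp 𝒰 : lp (fun _ : ℕ => ℝ) 2 →L[ℝ] lp (fun _ : ℕ => ℝ) 2) : lp (fun _ : ℕ => ℝ) 2 →ₗ[ℝ] lp (fun _ : ℕ => ℝ) 2))ᗮ)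
    (hS₁id : ∀ x ∈ LinearMap.range ((𝒰.adjoint.comp 𝒰 : lp (fun _ : ℕ => ℝ) 2 →L[ℝ] lp (fun _ : ℕ => ℝ) 2) : lp (fun _ : ℕ => ℝ) 2 →ₗ[ℝ] lp (fun _ : ℕ => ℝ) 2), (𝒰.adjoint.comp 𝒰) (S₁ x) = x)
    (S₂ : H →L[ℝ] H)
    (hS₂ker : LinearMap.ker (S₂ : H →ₗ[ℝ] H) = (LinearMap.range ((𝒰.comp 𝒰.adjoint : H →L[ℝ] H) : H →ₗ[ℝ] H))ᗮ)
    (hS₂ran : LinearMap.range (S₂ : H →ₗ[ℝ] H) = (LinearMap.ker ((𝒰.comp 𝒰.adjoint : H →L[ℝ] H) : H →ₗ[ℝ] H))ᗮ)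
    (hS₂id : ∀ x ∈ LinearMap.range ((𝒰.comp 𝒰.adjoint : H →L[ℝ] H) : H →ₗ[ℝ] H), (𝒰.comp 𝒰.adjoint) (S₂ x) = x)
    (T₁ : lp (fun _ : ℕ => ℝ) 2 →L[ℝ] lp (fun _ : ℕ => ℝ) 2)
    (hT₁pos : T₁.IsPositive) (hT₁sq : T₁.comp T₁ = S₁)
    (T₂ : H →L[ℝ] H)
    (hT₂pos : T₂.IsPositive) (hT₂sq : T₂.comp T₂ = S₂) :
    T₁.comp 𝒰.adjoint = 𝒰.adjoint.comp T₂ := by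
  set A := 𝒰.adjoint.comp 𝒰 with hA
  set Bop := 𝒰.comp 𝒰.adjoint with hBop
  set X := 𝒰.adjoint with hX
  -- selfadjointness of A, Bop
  have hAsa : IsSelfAdjoint A := by
    rw [IsSelfAdjoint, hA, star_eq_adjoint, adjoint_comp, adjoint_adjoint]
  have hBsa : IsSelfAdjoint Bop := by
    rw [IsSelfAdjoint, hBop, star_eq_adjoint, adjoint_comp, adjoint_adjoint]
  -- kernels
  have hkerA : ∀ u, A u = 0 → 𝒰 u = 0 := by
    intro u h
    have h2 : ⟪𝒰 u, 𝒰 u⟫ = 0 := by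
      rw [← adjoint_inner_left]
      have : 𝒰.adjoint (𝒰 u) = A u := rfl
      rw [this, h, inner_zero_left]
    exact inner_self_eq_zero.mp h2
  have hkerB : ∀ y, Bop y = 0 → X y = 0 := by
    intro y h
    have h2 : ⟪X y, X y⟫ = 0 := by
      rw [hX, adjoint_inner_right]
      have : 𝒰 (𝒰.adjoint y) = Bop y := rfl
      rw [this, h, inner_zero_left]
    exact inner_self_eq_zero.mp h2
  have hperpB : ∀ y, Bop y = 0 → y ∈ (LinearMap.range (Bop : H →ₗ[ℝ] H))ᗮ := by
    intro y h
    intro u hu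
    obtain ⟨z, rfl⟩ := hu
    change ⟪Bop z, y⟫ = 0
    rw [selfAdj_inner_left hBsa, h, inner_zero_right]
  have hperpB' : ∀ y, y ∈ (LinearMap.range (Bop : H →ₗ[ℝ] H))ᗮ → Bop y = 0 := by
    intro y hy
    have h := hy (Bop (Bop y)) ⟨Bop y, rfl⟩
    rw [selfAdj_inner_left hBsa] at h
    exact inner_self_eq_zero.mp (by rw [real_inner_comm]; exact h)
  -- Step 1 : S₁ X = X S₂
  have key : S₁ ∘L X - X ∘L S₂ = 0 := by
    apply ext_zero_of_selfAdjoint hBsa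
    · intro y h
      have hXy : X y = 0 := hkerB y h
      have hS₂y : S₂ y = 0 := by
        have : y ∈ LinearMap.ker (S₂ : H →ₗ[ℝ] H) := by rw [hS₂ker]; exact hperpB y h
        exact LinearMap.mem_ker.mp this
      simp [hXy, hS₂y]
    · intro z
      set w := X z with hw
      have claim1 : S₁ (A w) = w := by
        have hw_perp : w ∈ (LinearMap.ker (A : lp (fun _ : ℕ => ℝ) 2 →ₗ[ℝ] lp (fun _ : ℕ => ℝ) 2))ᗮ := by
          intro u hu
          have h𝒰u : 𝒰 u = 0 := hkerA u (LinearMap.mem_ker.mp hu)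
          rw [hw, hX, adjoint_inner_right, h𝒰u, inner_zero_left]
        have hs_mem : S₁ (A w) ∈ (LinearMap.ker (A : lp (fun _ : ℕ => ℝ) 2 →ₗ[ℝ] lp (fun _ : ℕ => ℝ) 2))ᗮ := by
          rw [← hS₁ran]; exact ⟨A w, rfl⟩
        have hAsw : A (S₁ (A w)) = A w := hS₁id (A w) ⟨w, rfl⟩
        have hdk : S₁ (A w) - w ∈ LinearMap.ker (A : lp (fun _ : ℕ => ℝ) 2 →ₗ[ℝ] lp (fun _ : ℕ => ℝ) 2) := by
          change A (S₁ (A w) - w) = 0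
          rw [map_sub, hAsw, sub_self]
        have hdp : S₁ (A w) - w ∈ (LinearMap.ker (A : lp (fun _ : ℕ => ℝ) 2 →ₗ[ℝ] lp (fun _ : ℕ => ℝ) 2))ᗮ := Submodule.sub_mem _ hs_mem hw_perp
        have h0 : S₁ (A w) - w = 0 := by
          have := hdp _ hdk
          exact inner_self_eq_zero.mp this
        exact sub_eq_zero.mp h0
      have claim2 : X (S₂ (Bop z)) = w := by
        have hBz : Bop (S₂ (Bop z)) = Bop z := hS₂id _ ⟨z, rfl⟩
        have hdiff : Bop (S₂ (Bop z) - z) = 0 := by rw [map_sub, hBz, sub_self]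
        have h := hkerB _ hdiff
        rw [map_sub, sub_eq_zero] at h
        exact h
      have hre : (S₁ ∘L X - X ∘L S₂) (Bop z) = S₁ (A w) - X (S₂ (Bop z)) := rfl
      rw [hre, claim1, claim2, sub_self]
  -- Step 2 : the square roots intertwine
  have key' : S₁ ∘L X = X ∘L S₂ := sub_eq_zero.mp key
  set D := T₁ ∘L X - X ∘L T₂ with hD
  have hTD : T₁ ∘L D + D ∘L T₂ = 0 := by
    have e1 : T₁ ∘L D = S₁ ∘L X - T₁ ∘L (X ∘L T₂) := by
      rw [hD, comp_sub, ← comp_assoc T₁ T₁ X, hT₁sq]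
    have e2 : D ∘L T₂ = T₁ ∘L (X ∘L T₂) - X ∘L S₂ := by
      rw [hD, sub_comp, comp_assoc T₁ X T₂, comp_assoc X T₂ T₂, hT₂sq]
    rw [e1, e2, key']
    abel
  have hTD' : T₁ ∘L D = -(D ∘L T₂) := by
    rw [← sub_eq_zero]
    rw [sub_neg_eq_add, hTD]
  have hadjD : T₂ ∘L adjoint D = -(adjoint D ∘L T₁) := by
    have h1 : adjoint (D ∘L T₂) = T₂ ∘L adjoint D := by
      rw [adjoint_comp, hT₂pos.isSelfAdjoint.adjoint_eq]
    have h2 : adjoint (T₁ ∘L D) = adjoint D ∘L T₁ := by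
      rw [adjoint_comp, hT₁pos.isSelfAdjoint.adjoint_eq]
    have h3 : D ∘L T₂ = -(T₁ ∘L D) := by rw [hTD', neg_neg]
    rw [← h1, h3, map_neg, h2]
  set P := adjoint D ∘L (T₁ ∘L D) with hP
  have hPpos : P.IsPositive := hT₁pos.adjoint_conj D
  set E₀ := adjoint D ∘L D with hE₀
  have hE₀pos : E₀.IsPositive := by
    have h := isPositive_adjoint_comp_self D
    simpa using h
  have hTE : T₂ ∘L E₀ = -P := by
    rw [hE₀, ← comp_assoc T₂ (adjoint D) D, hadjD, neg_comp, hP, comp_assoc]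
  have hET : E₀ ∘L T₂ = -P := by
    have h3 : D ∘L T₂ = -(T₁ ∘L D) := by rw [hTD', neg_neg]
    rw [hE₀, comp_assoc (adjoint D) D T₂, h3, comp_neg, hP]
  have hPzero : ∀ x, ⟪P x, x⟫ = 0 := by
    intro x
    have pos1 : 0 ≤ ⟪P x, x⟫ := by simpa using hPpos.inner_nonneg_left x
    have pos2 : 0 ≤ ⟪T₂ (E₀ x), x⟫ := by
      apply inner_mul_comm_pos_nonneg hT₂pos hE₀pos
      rw [ContinuousLinearMap.mul_def, ContinuousLinearMap.mul_def, hTE, hET]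
    have : T₂ (E₀ x) = -(P x) := by rw [← comp_apply, hTE, neg_apply]
    rw [this, inner_neg_left] at pos2
    linarith
  have hT₁D : ∀ x, T₁ (D x) = 0 := by
    intro x
    apply pos_apply_eq_zero_of_inner_self hT₁pos
    have : ⟪P x, x⟫ = ⟪T₁ (D x), D x⟫ := by
      rw [hP, comp_apply, comp_apply, adjoint_inner_left]
    rw [← this, hPzero x]
  have hDT₂ : ∀ x, D (T₂ x) = 0 := by
    intro x
    have := congrArg (fun (S : H →L[ℝ] lp (fun _ : ℕ => ℝ) 2) => S x) hTD'
    simp only [comp_apply, neg_apply] at this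
    rw [← neg_eq_iff_eq_neg] at this
    rw [← this, hT₁D, neg_zero]
  -- Step 3 : conclude D = 0
  have hDzero : D = 0 := by
    apply ext_zero_of_selfAdjoint hT₂pos.isSelfAdjoint
    · intro y h
      have hS₂y : S₂ y = 0 := by rw [← hT₂sq, comp_apply, h, map_zero]
      have hBy : Bop y = 0 := by
        apply hperpB' y
        rw [← hS₂ker]
        exact LinearMap.mem_ker.mpr hS₂y
      have hXy : X y = 0 := hkerB y hBy
      have hT₂y : T₂ y = 0 := h
      simp [hD, hXy, hT₂y]
    · exact hDT₂
  have := sub_eq_zero.mp hDzero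
  rw [hD] at hDzero
  exact sub_eq_zero.mp hDzero
end

section
/- Let {u_j} be a frame sequence with synthesis operator 𝒰 and closed span U, and {g_k} a frame sequence with synthesis operator 𝒢, lower frame bound C and upper frame bound D, and closed span G. If cos(φ_{GU}) > 0, then N(𝒢) = N((𝒰*𝒰)^{†/2} 𝒰* 𝒢), and √C·cos(φ_{GU})·‖c‖ ≤ ‖(𝒰*𝒰)^{†/2} 𝒰* 𝒢 c‖ ≤ √D·‖c‖ for all c ∈ N(𝒢)^⊥. -/
open Submodule ContinuousLinearMap
open scoped RealInnerProductSpace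

section Aux

variable {E H : Type*} [NormedAddCommGroup E] [InnerProductSpace ℝ E] [CompleteSpace E]
  [NormedAddCommGroup H] [InnerProductSpace ℝ H] [CompleteSpace H]

/-- The adjoint kills the orthogonal complement of the range. -/
lemma adjoint_apply_orthogonal_eq_zero (A : E →L[ℝ] H) {x : H}
    (hx : x ∈ (LinearMap.range (A : E →ₗ[ℝ] H))ᗮ) : A.adjoint x = 0 := by
  have h : ⟪A.adjoint x, A.adjoint x⟫ = 0 := by
    rw [ContinuousLinearMap.adjoint_inner_left]
    have := hx (A (A.adjoint x)) ⟨A.adjoint x, rfl⟩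
    rwa [real_inner_comm] at this
  exact inner_self_eq_zero.mp h

/-- The adjoint only sees the projection onto the closed span of the range. -/
lemma adjoint_eq_adjoint_proj (A : E →L[ℝ] H) (V : Submodule ℝ H) [CompleteSpace V]
    (hV : V = (LinearMap.range (A : E →ₗ[ℝ] H)).topologicalClosure) (f : H) :
    A.adjoint f = A.adjoint (orthogonalProjection V f : H) := by
  have hmem : f - (orthogonalProjection V f : H) ∈ Vᗮ :=
    Submodule.sub_starProjection_mem_orthogonal f
  have hle : Vᗮ ≤ (LinearMap.range (A : E →ₗ[ℝ] H))ᗮ := by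
    rw [hV]; exact Submodule.orthogonal_le (Submodule.le_topologicalClosure _)
  have h0 : A.adjoint (f - (orthogonalProjection V f : H)) = 0 :=
    adjoint_apply_orthogonal_eq_zero A (hle hmem)
  rw [map_sub, sub_eq_zero] at h0
  exact h0

set_option maxHeartbeats 1000000 in
/-- The key identity: the analysis operator of the canonical tight frame,
`T ∘ 𝒰*` with `T = (𝒰*𝒰)^{†/2}`, satisfies `‖T(𝒰* f)‖ = ‖P_U f‖`. -/
lemma norm_T_adjoint_eq (𝒰 : E →L[ℝ] H) (U : Submodule ℝ H) [CompleteSpace U]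
    (hU : U = (LinearMap.range (𝒰 : E →ₗ[ℝ] H)).topologicalClosure)
    (Sd : E →L[ℝ] E)
    (hSdid : ∀ x ∈ LinearMap.range (𝒰.adjoint.comp 𝒰 : E →ₗ[ℝ] E), (𝒰.adjoint.comp 𝒰) (Sd x) = x)
    (T : E →L[ℝ] E) (hTpos : T.IsPositive) (hTsq : T.comp T = Sd) (f : H) :
    ‖T (𝒰.adjoint f)‖ = ‖(orthogonalProjection U f : H)‖ := by
  -- Step 1: `𝒰 (Sd (𝒰* x)) = x` on the range of `𝒰`.
  have hran : ∀ y : E, 𝒰 (Sd (𝒰.adjoint (𝒰 y))) = 𝒰 y := by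
    intro y
    have h1 : (𝒰.adjoint.comp 𝒰) (Sd (𝒰.adjoint (𝒰 y))) = 𝒰.adjoint (𝒰 y) :=
      hSdid _ ⟨y, rfl⟩
    set z : E := Sd (𝒰.adjoint (𝒰 y)) - y with hz
    have hz0 : 𝒰.adjoint (𝒰 z) = 0 := by
      simp only [hz, map_sub]
      simpa [ContinuousLinearMap.comp_apply] using sub_eq_zero.mpr h1
    have hinner : ⟪𝒰 z, 𝒰 z⟫ = 0 := by
      rw [← ContinuousLinearMap.adjoint_inner_left, hz0, inner_zero_left]
    have h𝒰z : 𝒰 z = 0 := inner_self_eq_zero.mp hinner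
    have := sub_eq_zero.mp (by simpa [hz, map_sub] using h𝒰z)
    exact this
  -- Step 2: extend to `U` by continuity.
  have hclosed : IsClosed {x : H | 𝒰 (Sd (𝒰.adjoint x)) = x} :=
    isClosed_eq ((𝒰.comp (Sd.comp 𝒰.adjoint)).continuous) continuous_id
  have hUfix : ∀ p ∈ U, 𝒰 (Sd (𝒰.adjoint p)) = p := by
    intro p hp
    have hsub : (LinearMap.range (𝒰 : E →ₗ[ℝ] H) : Set H) ⊆ {x : H | 𝒰 (Sd (𝒰.adjoint x)) = x} := by
      rintro x ⟨y, rfl⟩; exact hran y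
    have : (U : Set H) ⊆ {x : H | 𝒰 (Sd (𝒰.adjoint x)) = x} := by
      rw [hU, Submodule.topologicalClosure_coe]
      exact closure_minimal hsub hclosed
    exact this hp
  -- Step 3: compute the norm.
  set p : H := (orthogonalProjection U f : H) with hpdef
  have hproj : 𝒰.adjoint f = 𝒰.adjoint p := adjoint_eq_adjoint_proj 𝒰 U hU f
  have hTself : ContinuousLinearMap.adjoint T = T :=
    ContinuousLinearMap.isSelfAdjoint_iff'.mp hTpos.isSelfAdjoint
  have hsq : ‖T (𝒰.adjoint f)‖ ^ 2 = ‖p‖ ^ 2 := by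
    have h1 := ContinuousLinearMap.adjoint_inner_left T (T (𝒰.adjoint f)) (𝒰.adjoint f)
    rw [hTself] at h1
    have h2 : T (T (𝒰.adjoint f)) = Sd (𝒰.adjoint f) := by
      rw [← ContinuousLinearMap.comp_apply, hTsq]
    have h3 : ⟪𝒰.adjoint p, Sd (𝒰.adjoint p)⟫ = ⟪p, 𝒰 (Sd (𝒰.adjoint p))⟫ :=
      ContinuousLinearMap.adjoint_inner_left 𝒰 _ _
    calc ‖T (𝒰.adjoint f)‖ ^ 2 = ⟪T (𝒰.adjoint f), T (𝒰.adjoint f)⟫ :=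
          (real_inner_self_eq_norm_sq _).symm
      _ = ⟪𝒰.adjoint f, Sd (𝒰.adjoint f)⟫ := by rw [h1, h2]
      _ = ⟪𝒰.adjoint p, Sd (𝒰.adjoint p)⟫ := by rw [hproj]
      _ = ⟪p, 𝒰 (Sd (𝒰.adjoint p))⟫ := h3
      _ = ⟪p, p⟫ := by rw [hUfix p (orthogonalProjection U f).2]
      _ = ‖p‖ ^ 2 := real_inner_self_eq_norm_sq _
  exact (sq_eq_sq₀ (norm_nonneg _) (norm_nonneg _)).mp hsq

/-- The infimum defining `cosAngle` gives a lower bound for projections of elements of `S`. -/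
lemma cosAngle_mul_norm_le (S V : Submodule ℝ H) [CompleteSpace V] {g : H} (hg : g ∈ S) :
    cosAngle S V * ‖g‖ ≤ ‖(orthogonalProjection V g : H)‖ := by
  rcases eq_or_ne g 0 with rfl | hg0
  · simp
  have hgpos : (0 : ℝ) < ‖g‖ := norm_pos_iff.mpr hg0
  set s : H := ‖g‖⁻¹ • g with hs
  have hsmem : s ∈ S := S.smul_mem _ hg
  have hsnorm : ‖s‖ = 1 := norm_smul_inv_norm hg0
  have hmemset : ‖g‖⁻¹ * ‖(orthogonalProjection V g : H)‖ ∈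
      {r : ℝ | ∃ s ∈ S, ‖s‖ = 1 ∧ r = ‖(orthogonalProjection V s : H)‖} := by
    refine ⟨s, hsmem, hsnorm, ?_⟩
    rw [hs, map_smul]
    simp [norm_smul, abs_of_nonneg (inv_nonneg.mpr (norm_nonneg g))]
  have hbdd : BddBelow {r : ℝ | ∃ s ∈ S, ‖s‖ = 1 ∧ r = ‖(orthogonalProjection V s : H)‖} := by
    refine ⟨0, ?_⟩
    rintro r ⟨s, _, _, rfl⟩
    exact norm_nonneg _
  have hle : cosAngle S V ≤ ‖g‖⁻¹ * ‖(orthogonalProjection V g : H)‖ :=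
    csInf_le hbdd hmemset
  calc cosAngle S V * ‖g‖ ≤ (‖g‖⁻¹ * ‖(orthogonalProjection V g : H)‖) * ‖g‖ :=
        mul_le_mul_of_nonneg_right hle hgpos.le
    _ = ‖(orthogonalProjection V g : H)‖ := by field_simp

set_option maxHeartbeats 1000000 in
/-- Upper frame bound gives `‖𝒢 c‖ ≤ √D ‖c‖`. -/
lemma norm_apply_le_sqrt_mul (𝒢 : E →L[ℝ] H) (G : Submodule ℝ H) [CompleteSpace G]
    (hG : G = (LinearMap.range (𝒢 : E →ₗ[ℝ] H)).topologicalClosure) (D : ℝ)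
    (hup : ∀ f ∈ G, ‖𝒢.adjoint f‖ ^ 2 ≤ D * ‖f‖ ^ 2) (c : E) :
    ‖𝒢 c‖ ≤ Real.sqrt D * ‖c‖ := by
  rcases eq_or_ne (𝒢 c) 0 with h0 | h0
  · rw [h0, norm_zero]
    positivity
  have hmem : 𝒢 c ∈ G := by
    rw [hG]; exact Submodule.le_topologicalClosure _ ⟨c, rfl⟩
  have h1 : ‖𝒢.adjoint (𝒢 c)‖ ^ 2 ≤ D * ‖𝒢 c‖ ^ 2 := hup _ hmem
  have hgpos : (0 : ℝ) < ‖𝒢 c‖ := norm_pos_iff.mpr h0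
  have hD : 0 ≤ D := by nlinarith [sq_nonneg ‖𝒢.adjoint (𝒢 c)‖, pow_pos hgpos 2, h1]
  have h3 : ‖𝒢.adjoint (𝒢 c)‖ ≤ Real.sqrt D * ‖𝒢 c‖ := by
    have := Real.sqrt_le_sqrt h1
    rwa [Real.sqrt_sq (norm_nonneg _), Real.sqrt_mul hD,
      Real.sqrt_sq (norm_nonneg _)] at this
  have h2 : ‖𝒢 c‖ ^ 2 ≤ ‖𝒢.adjoint (𝒢 c)‖ * ‖c‖ := by
    have hi : ⟪𝒢.adjoint (𝒢 c), c⟫ = ⟪𝒢 c, 𝒢 c⟫ :=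
      ContinuousLinearMap.adjoint_inner_left 𝒢 c (𝒢 c)
    calc ‖𝒢 c‖ ^ 2 = ⟪𝒢 c, 𝒢 c⟫ := (real_inner_self_eq_norm_sq _).symm
      _ = ⟪𝒢.adjoint (𝒢 c), c⟫ := hi.symm
      _ ≤ ‖𝒢.adjoint (𝒢 c)‖ * ‖c‖ := real_inner_le_norm _ _
  have key : ‖𝒢 c‖ * ‖𝒢 c‖ ≤ (Real.sqrt D * ‖c‖) * ‖𝒢 c‖ := by
    nlinarith [norm_nonneg c, mul_le_mul_of_nonneg_right h3 (norm_nonneg c)]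
  exact le_of_mul_le_mul_right key hgpos

set_option maxHeartbeats 1000000 in
/-- Lower frame bound gives `√C ‖c‖ ≤ ‖𝒢 c‖` on `(ker 𝒢)ᗮ`. -/
lemma sqrt_mul_norm_le_norm_apply (𝒢 : E →L[ℝ] H) (G : Submodule ℝ H) [CompleteSpace G]
    (hG : G = (LinearMap.range (𝒢 : E →ₗ[ℝ] H)).topologicalClosure) (C : ℝ) (hC : 0 < C)
    (hlo : ∀ f ∈ G, C * ‖f‖ ^ 2 ≤ ‖𝒢.adjoint f‖ ^ 2) :
    ∀ c ∈ (LinearMap.ker (𝒢 : E →ₗ[ℝ] H))ᗮ, Real.sqrt C * ‖c‖ ≤ ‖𝒢 c‖ := by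
  have hker : LinearMap.ker (𝒢 : E →ₗ[ℝ] H) = (LinearMap.range (𝒢.adjoint : H →ₗ[ℝ] E))ᗮ := by
    ext c
    simp only [LinearMap.mem_ker, ContinuousLinearMap.coe_coe, Submodule.mem_orthogonal]
    constructor
    · rintro h x ⟨f, rfl⟩
      rw [ContinuousLinearMap.coe_coe, ContinuousLinearMap.adjoint_inner_left, h, inner_zero_right]
    · intro h
      have := h (𝒢.adjoint (𝒢 c)) ⟨𝒢 c, rfl⟩
      rw [ContinuousLinearMap.adjoint_inner_left] at this
      exact inner_self_eq_zero.mp this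
  have horth : (LinearMap.ker (𝒢 : E →ₗ[ℝ] H))ᗮ = (LinearMap.range (𝒢.adjoint : H →ₗ[ℝ] E)).topologicalClosure := by
    rw [hker, Submodule.orthogonal_orthogonal_eq_closure]
  have hclosed : IsClosed {c : E | Real.sqrt C * ‖c‖ ≤ ‖𝒢 c‖} :=
    isClosed_le (continuous_const.mul continuous_norm) 𝒢.continuous.norm
  have hsub : (LinearMap.range (𝒢.adjoint : H →ₗ[ℝ] E) : Set E) ⊆ {c : E | Real.sqrt C * ‖c‖ ≤ ‖𝒢 c‖} := by
    rintro _ ⟨f, rfl⟩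
    have hpr : 𝒢.adjoint f = 𝒢.adjoint (orthogonalProjection G f : H) :=
      adjoint_eq_adjoint_proj 𝒢 G hG f
    set p : H := (orthogonalProjection G f : H) with hp
    have hpG : p ∈ G := (orthogonalProjection G f).2
    simp only [Set.mem_setOf_eq, ContinuousLinearMap.coe_coe, hpr]
    have hlop : C * ‖p‖ ^ 2 ≤ ‖𝒢.adjoint p‖ ^ 2 := hlo p hpG
    by_cases hc0 : 𝒢.adjoint p = 0
    · rw [hc0, map_zero, norm_zero, norm_zero, mul_zero]
    have hcpos : (0 : ℝ) < ‖𝒢.adjoint p‖ := norm_pos_iff.mpr hc0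
    have hCs : Real.sqrt C * ‖p‖ ≤ ‖𝒢.adjoint p‖ := by
      have := Real.sqrt_le_sqrt hlop
      rwa [Real.sqrt_mul hC.le, Real.sqrt_sq (norm_nonneg _),
        Real.sqrt_sq (norm_nonneg _)] at this
    have hcs : ‖𝒢.adjoint p‖ ^ 2 ≤ ‖p‖ * ‖𝒢 (𝒢.adjoint p)‖ := by
      have hi : ⟪𝒢.adjoint p, 𝒢.adjoint p⟫ = ⟪p, 𝒢 (𝒢.adjoint p)⟫ :=
        ContinuousLinearMap.adjoint_inner_left 𝒢 (𝒢.adjoint p) p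
      calc ‖𝒢.adjoint p‖ ^ 2 = ⟪𝒢.adjoint p, 𝒢.adjoint p⟫ :=
            (real_inner_self_eq_norm_sq _).symm
        _ = ⟪p, 𝒢 (𝒢.adjoint p)⟫ := hi
        _ ≤ ‖p‖ * ‖𝒢 (𝒢.adjoint p)‖ := real_inner_le_norm _ _
    have key : Real.sqrt C * ‖𝒢.adjoint p‖ * ‖𝒢.adjoint p‖
        ≤ ‖𝒢 (𝒢.adjoint p)‖ * ‖𝒢.adjoint p‖ := by
      nlinarith [Real.sqrt_nonneg C, norm_nonneg (𝒢 (𝒢.adjoint p)),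
        mul_le_mul_of_nonneg_right hCs (norm_nonneg (𝒢 (𝒢.adjoint p))),
        mul_le_mul_of_nonneg_left hcs (Real.sqrt_nonneg C)]
    exact le_of_mul_le_mul_right key hcpos
  intro c hc
  have hmem : c ∈ closure (LinearMap.range (𝒢.adjoint : H →ₗ[ℝ] E) : Set E) := by
    have := horth ▸ hc
    rwa [← Submodule.topologicalClosure_coe]
  exact closure_minimal hsub hclosed hmem


end Aux

/-- Let `𝒰, 𝒢` be synthesis operators of frame sequences with closed spans `U, G`,
`{g_k}` having frame bounds `C, D`, and let `T = (𝒰*𝒰)^{†/2}`. If `cos(φ_{GU}) > 0`, then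
`N(𝒢) = N((𝒰*𝒰)^{†/2} 𝒰* 𝒢)` and
`√C·cos(φ_{GU})·‖c‖ ≤ ‖(𝒰*𝒰)^{†/2} 𝒰* 𝒢 c‖ ≤ √D·‖c‖` for all `c ∈ N(𝒢)^⊥`. -/
theorem stmt16 {H : Type*} [NormedAddCommGroup H] [InnerProductSpace ℝ H] [CompleteSpace H]
    (𝒰 𝒢 : lp (fun _ : ℕ => ℝ) 2 →L[ℝ] H)
    (U G : Submodule ℝ H) [CompleteSpace U] [CompleteSpace G]
    (hU : U = (LinearMap.range (𝒰 : lp (fun _ : ℕ => ℝ) 2 →ₗ[ℝ] H)).topologicalClosure)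
    (hG : G = (LinearMap.range (𝒢 : lp (fun _ : ℕ => ℝ) 2 →ₗ[ℝ] H)).topologicalClosure)
    (A B : ℝ) (hA : 0 < A)
    (hframeU : ∀ f ∈ U, A * ‖f‖ ^ 2 ≤ ‖𝒰.adjoint f‖ ^ 2 ∧ ‖𝒰.adjoint f‖ ^ 2 ≤ B * ‖f‖ ^ 2)
    (C D : ℝ) (hC : 0 < C)
    (hframeG : ∀ f ∈ G, C * ‖f‖ ^ 2 ≤ ‖𝒢.adjoint f‖ ^ 2 ∧ ‖𝒢.adjoint f‖ ^ 2 ≤ D * ‖f‖ ^ 2)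
    -- `Sd = (𝒰*𝒰)†` and `T = (𝒰*𝒰)^{†/2}`:
    (Sd : lp (fun _ : ℕ => ℝ) 2 →L[ℝ] lp (fun _ : ℕ => ℝ) 2)
    (hSdker : LinearMap.ker (Sd : lp (fun _ : ℕ => ℝ) 2 →ₗ[ℝ] lp (fun _ : ℕ => ℝ) 2) = (LinearMap.range (𝒰.adjoint.comp 𝒰 : lp (fun _ : ℕ => ℝ) 2 →ₗ[ℝ] lp (fun _ : ℕ => ℝ) 2))ᗮ)
    (hSdran : LinearMap.range (Sd : lp (fun _ : ℕ => ℝ) 2 →ₗ[ℝ] lp (fun _ : ℕ => ℝ) 2) = (LinearMap.ker (𝒰.adjoint.comp 𝒰 : lp (fun _ : ℕ => ℝ) 2 →ₗ[ℝ] lp (fun _ : ℕ => ℝ) 2))ᗮ)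
    (hSdid : ∀ x ∈ LinearMap.range (𝒰.adjoint.comp 𝒰 : lp (fun _ : ℕ => ℝ) 2 →ₗ[ℝ] lp (fun _ : ℕ => ℝ) 2), (𝒰.adjoint.comp 𝒰) (Sd x) = x)
    (T : lp (fun _ : ℕ => ℝ) 2 →L[ℝ] lp (fun _ : ℕ => ℝ) 2)
    (hTpos : T.IsPositive) (hTsq : T.comp T = Sd)
    (hcos : 0 < cosAngle G U) :
    LinearMap.ker (𝒢 : lp (fun _ : ℕ => ℝ) 2 →ₗ[ℝ] H) = LinearMap.ker (T.comp (𝒰.adjoint.comp 𝒢) : lp (fun _ : ℕ => ℝ) 2 →ₗ[ℝ] lp (fun _ : ℕ => ℝ) 2) ∧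
    ∀ c ∈ (LinearMap.ker (𝒢 : lp (fun _ : ℕ => ℝ) 2 →ₗ[ℝ] H))ᗮ,
      Real.sqrt C * cosAngle G U * ‖c‖ ≤ ‖T (𝒰.adjoint (𝒢 c))‖ ∧
      ‖T (𝒰.adjoint (𝒢 c))‖ ≤ Real.sqrt D * ‖c‖ := by
  have key : ∀ f : H, ‖T (𝒰.adjoint f)‖ = ‖(orthogonalProjection U f : H)‖ :=
    norm_T_adjoint_eq 𝒰 U hU Sd hSdid T hTpos hTsq
  have hup : ∀ c, ‖𝒢 c‖ ≤ Real.sqrt D * ‖c‖ :=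
    norm_apply_le_sqrt_mul 𝒢 G hG D (fun f hf => (hframeG f hf).2)
  have hlo : ∀ c ∈ (LinearMap.ker (𝒢 : lp (fun _ : ℕ => ℝ) 2 →ₗ[ℝ] H))ᗮ, Real.sqrt C * ‖c‖ ≤ ‖𝒢 c‖ :=
    sqrt_mul_norm_le_norm_apply 𝒢 G hG C hC (fun f hf => (hframeG f hf).1)
  have hGm : ∀ c, 𝒢 c ∈ G := by
    intro c; rw [hG]; exact Submodule.le_topologicalClosure _ ⟨c, rfl⟩
  have hcosb : ∀ c, cosAngle G U * ‖𝒢 c‖ ≤ ‖(orthogonalProjection U (𝒢 c) : H)‖ :=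
    fun c => cosAngle_mul_norm_le G U (hGm c)
  have hPle : ∀ x : H, ‖(orthogonalProjection U x : H)‖ ≤ ‖x‖ := by
    intro x
    calc ‖(orthogonalProjection U x : H)‖ = ‖orthogonalProjection U x‖ := rfl
      _ ≤ ‖orthogonalProjection U‖ * ‖x‖ := (orthogonalProjection U).le_opNorm x
      _ ≤ 1 * ‖x‖ := mul_le_mul_of_nonneg_right (orthogonalProjection_norm_le U) (norm_nonneg x)
      _ = ‖x‖ := one_mul ‖x‖
  constructor
  · ext c
    simp only [LinearMap.mem_ker, ContinuousLinearMap.coe_coe, ContinuousLinearMap.comp_apply]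
    constructor
    · intro h
      rw [h, map_zero, map_zero]
    · intro h
      have h0 : ‖(orthogonalProjection U (𝒢 c) : H)‖ = 0 := by
        rw [← key, h, norm_zero]
      have h1 := hcosb c
      rw [h0] at h1
      have h2 : ‖𝒢 c‖ = 0 := le_antisymm (by nlinarith [norm_nonneg (𝒢 c)]) (norm_nonneg _)
      exact norm_eq_zero.mp h2
  · intro c hc
    refine ⟨?_, ?_⟩
    · rw [key]
      calc Real.sqrt C * cosAngle G U * ‖c‖ = cosAngle G U * (Real.sqrt C * ‖c‖) := by ring
        _ ≤ cosAngle G U * ‖𝒢 c‖ := mul_le_mul_of_nonneg_left (hlo c hc) hcos.le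
        _ ≤ ‖(orthogonalProjection U (𝒢 c) : H)‖ := hcosb c
    · rw [key]
      exact (hPle _).trans (hup c)
end

section
/- Let {u_j} be a frame sequence with synthesis operator 𝒰 and closed span U, {g_k} a frame sequence with synthesis operator 𝒢 and closed span G, and cos(φ_{GU}) > 0. Then the operator R = 𝒢((𝒰*𝒰)^{†/2}𝒰*𝒢)†(𝒰*𝒰)^{†/2}𝒰* is well defined, is idempotent, has range G and null space P_U(G)^⊥; i.e., R equals the oblique projection with range G and kernel P_U(G)^⊥. -/
open Submodule ContinuousLinearMap
open scoped RealInnerProductSpace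

set_option maxHeartbeats 800000

/-- A frame sequence's synthesis operator has closed range equal to the closed span. -/
theorem frame_range_eq' {E H : Type*} [NormedAddCommGroup E] [InnerProductSpace ℝ E]
    [NormedAddCommGroup H] [InnerProductSpace ℝ H] [CompleteSpace E] [CompleteSpace H]
    (𝒢 : E →L[ℝ] H) (G : Submodule ℝ H)
    (hG : G = (LinearMap.range (𝒢 : E →ₗ[ℝ] H)).topologicalClosure)
    (C : ℝ) (hC : 0 < C)
    (hframe : ∀ f ∈ G, C * ‖f‖ ^ 2 ≤ ‖𝒢.adjoint f‖ ^ 2) :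
    LinearMap.range (𝒢 : E →ₗ[ℝ] H) = G := by
  have hle : LinearMap.range (𝒢 : E →ₗ[ℝ] H) ≤ G := hG ▸ Submodule.le_topologicalClosure _
  have hGcl : IsClosed (G : Set H) := hG ▸ (LinearMap.range (𝒢 : E →ₗ[ℝ] H)).isClosed_topologicalClosure
  haveI : CompleteSpace G := hGcl.completeSpace_coe
  set F' : G →L[ℝ] H := 𝒢.comp (𝒢.adjoint.comp G.subtypeL) with hF'
  have hkey : ∀ g : G, ⟪(g : H), F' g⟫ = ‖𝒢.adjoint ((g : G) : H)‖ ^ 2 := by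
    intro g
    have h5 : ⟪𝒢.adjoint (g : H), 𝒢.adjoint (g : H)⟫ = ⟪(g : H), 𝒢 (𝒢.adjoint (g : H))⟫ :=
      ContinuousLinearMap.adjoint_inner_left 𝒢 (𝒢.adjoint (g : H)) (g : H)
    rw [hF']
    simp only [ContinuousLinearMap.comp_apply, Submodule.subtypeL_apply]
    rw [← h5, real_inner_self_eq_norm_sq, sq]
  have hbound : ∀ g : G, ‖g‖ ≤ C⁻¹ * ‖F' g‖ := by
    intro g
    have h1 : C * ‖(g : H)‖ ^ 2 ≤ ‖𝒢.adjoint (g : H)‖ ^ 2 := hframe _ g.2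
    have h2 : ⟪(g : H), F' g⟫ ≤ ‖(g : H)‖ * ‖F' g‖ := real_inner_le_norm _ _
    have h3 : C * ‖(g : H)‖ ^ 2 ≤ ‖(g : H)‖ * ‖F' g‖ := by
      rw [← hkey] at h1; linarith
    have hng : ‖g‖ = ‖(g : H)‖ := rfl
    rw [hng]
    have h4 : C * ‖(g : H)‖ ≤ ‖F' g‖ := by
      rcases (norm_nonneg (g : H)).eq_or_lt with h0 | h0
      · rw [← h0, mul_zero]; exact norm_nonneg _
      · nlinarith
    calc ‖(g : H)‖ = C⁻¹ * (C * ‖(g : H)‖) := by field_simp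
      _ ≤ C⁻¹ * ‖F' g‖ := by
          apply mul_le_mul_of_nonneg_left h4 (by positivity)
  have hanti : AntilipschitzWith (Real.toNNReal C⁻¹) F' := by
    apply ContinuousLinearMap.antilipschitz_of_bound
    intro x
    rw [Real.coe_toNNReal _ (by positivity)]
    exact hbound x
  have hclosed : IsClosed (Set.range F') := hanti.isClosed_range F'.uniformContinuous
  have hNrange : (LinearMap.range (F' : G →ₗ[ℝ] H) : Set H) = Set.range F' := by
    ext v; simp [LinearMap.mem_range]
  have hNcl : IsClosed ((LinearMap.range (F' : G →ₗ[ℝ] H) : Submodule ℝ H) : Set H) := hNrange ▸ hclosed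
  have hNG : LinearMap.range (F' : G →ₗ[ℝ] H) ≤ G := by
    rintro _ ⟨g, rfl⟩
    exact hle ⟨𝒢.adjoint (g : H), rfl⟩
  haveI : CompleteSpace (LinearMap.range (F' : G →ₗ[ℝ] H) : Submodule ℝ H) := hNcl.completeSpace_coe
  refine le_antisymm hle ?_
  intro g hg
  set N : Submodule ℝ H := LinearMap.range (F' : G →ₗ[ℝ] H)
  set q : H := (orthogonalProjection N g : H) with hq
  have hqN : q ∈ N := (orthogonalProjection N g).2
  have hhG : g - q ∈ G := G.sub_mem hg (hNG hqN)
  have hperp : g - q ∈ Nᗮ := sub_starProjection_mem_orthogonal g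
  have hF'h : F' ⟨g - q, hhG⟩ ∈ N := ⟨_, rfl⟩
  have h0 : ⟪g - q, F' ⟨g - q, hhG⟩⟫ = 0 := by
    rw [real_inner_comm]
    exact (Submodule.mem_orthogonal N (g - q)).1 hperp _ hF'h
  have h1 : ‖𝒢.adjoint (g - q)‖ ^ 2 = 0 := by
    have := hkey ⟨g - q, hhG⟩
    rw [h0] at this
    exact this.symm
  have h2 : C * ‖g - q‖ ^ 2 ≤ 0 := by
    have h6 := hframe (g - q) hhG
    rw [h1] at h6; exact h6
  have h3 : g - q = 0 := by
    rw [← norm_eq_zero]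
    by_contra hne
    have hpos : 0 < ‖g - q‖ := lt_of_le_of_ne (norm_nonneg _) (Ne.symm hne)
    nlinarith [mul_pos hC (pow_pos hpos 2)]
  have : g = q := by rwa [sub_eq_zero] at h3
  rw [this]
  obtain ⟨y, hy⟩ := hqN
  rw [hF'] at hy
  simp only [ContinuousLinearMap.coe_coe, ContinuousLinearMap.comp_apply, Submodule.subtypeL_apply] at hy
  exact ⟨𝒢.adjoint (y : H), hy⟩


/-- If `cos(φ_{GU}) > 0`, then `R = 𝒢((𝒰*𝒰)^{†/2}𝒰*𝒢)†(𝒰*𝒰)^{†/2}𝒰*` is well defined,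
idempotent, has range `G` and null space `P_U(G)^⊥`; i.e., `R` is the oblique projection
with range `G` and kernel `P_U(G)^⊥`.  Here `T = (𝒰*𝒰)^{†/2}` is the positive square root
of the pseudoinverse `Sd = (𝒰*𝒰)†`, and `Kd = ((𝒰*𝒰)^{†/2}𝒰*𝒢)†` is a pseudoinverse. -/
theorem stmt17 {H : Type*} [NormedAddCommGroup H] [InnerProductSpace ℝ H] [CompleteSpace H]
    (𝒰 𝒢 : lp (fun _ : ℕ => ℝ) 2 →L[ℝ] H)
    (U G : Submodule ℝ H) [CompleteSpace U] [CompleteSpace G]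
    (hU : U = (LinearMap.range (𝒰 : lp (fun _ : ℕ => ℝ) 2 →ₗ[ℝ] H)).topologicalClosure)
    (hG : G = (LinearMap.range (𝒢 : lp (fun _ : ℕ => ℝ) 2 →ₗ[ℝ] H)).topologicalClosure)
    (A B : ℝ) (hA : 0 < A)
    (hframeU : ∀ f ∈ U, A * ‖f‖ ^ 2 ≤ ‖𝒰.adjoint f‖ ^ 2 ∧ ‖𝒰.adjoint f‖ ^ 2 ≤ B * ‖f‖ ^ 2)
    (C D : ℝ) (hC : 0 < C)
    (hframeG : ∀ f ∈ G, C * ‖f‖ ^ 2 ≤ ‖𝒢.adjoint f‖ ^ 2 ∧ ‖𝒢.adjoint f‖ ^ 2 ≤ D * ‖f‖ ^ 2)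
    -- `Sd = (𝒰*𝒰)†` and `T = (𝒰*𝒰)^{†/2}`:
    (Sd : lp (fun _ : ℕ => ℝ) 2 →L[ℝ] lp (fun _ : ℕ => ℝ) 2)
    (hSdker : LinearMap.ker (Sd : lp (fun _ : ℕ => ℝ) 2 →ₗ[ℝ] lp (fun _ : ℕ => ℝ) 2) = (LinearMap.range ((𝒰.adjoint.comp 𝒰) :
        lp (fun _ : ℕ => ℝ) 2 →ₗ[ℝ] lp (fun _ : ℕ => ℝ) 2))ᗮ)
    (hSdran : LinearMap.range (Sd : lp (fun _ : ℕ => ℝ) 2 →ₗ[ℝ] lp (fun _ : ℕ => ℝ) 2) = (LinearMap.ker ((𝒰.adjoint.comp 𝒰) :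
        lp (fun _ : ℕ => ℝ) 2 →ₗ[ℝ] lp (fun _ : ℕ => ℝ) 2))ᗮ)
    (hSdid : ∀ x ∈ LinearMap.range ((𝒰.adjoint.comp 𝒰) :
        lp (fun _ : ℕ => ℝ) 2 →ₗ[ℝ] lp (fun _ : ℕ => ℝ) 2), (𝒰.adjoint.comp 𝒰) (Sd x) = x)
    (T : lp (fun _ : ℕ => ℝ) 2 →L[ℝ] lp (fun _ : ℕ => ℝ) 2)
    (hTpos : T.IsPositive) (hTsq : T.comp T = Sd)
    -- `Kd = (T𝒰*𝒢)†`, the pseudoinverse of `K = (𝒰*𝒰)^{†/2}𝒰*𝒢`: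
    (Kd : lp (fun _ : ℕ => ℝ) 2 →L[ℝ] lp (fun _ : ℕ => ℝ) 2)
    (hKdker : LinearMap.ker (Kd : lp (fun _ : ℕ => ℝ) 2 →ₗ[ℝ] lp (fun _ : ℕ => ℝ) 2) = (LinearMap.range ((T.comp (𝒰.adjoint.comp 𝒢)) :
        lp (fun _ : ℕ => ℝ) 2 →ₗ[ℝ] lp (fun _ : ℕ => ℝ) 2))ᗮ)
    (hKdran : LinearMap.range (Kd : lp (fun _ : ℕ => ℝ) 2 →ₗ[ℝ] lp (fun _ : ℕ => ℝ) 2) = (LinearMap.ker ((T.comp (𝒰.adjoint.comp 𝒢)) :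
        lp (fun _ : ℕ => ℝ) 2 →ₗ[ℝ] lp (fun _ : ℕ => ℝ) 2))ᗮ)
    (hKdid : ∀ x ∈ LinearMap.range ((T.comp (𝒰.adjoint.comp 𝒢)) :
        lp (fun _ : ℕ => ℝ) 2 →ₗ[ℝ] lp (fun _ : ℕ => ℝ) 2),
      (T.comp (𝒰.adjoint.comp 𝒢)) (Kd x) = x)
    (hcos : 0 < cosAngle G U) :
    (∀ x : H, (𝒢.comp (Kd.comp (T.comp 𝒰.adjoint)))
        ((𝒢.comp (Kd.comp (T.comp 𝒰.adjoint))) x) =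
        (𝒢.comp (Kd.comp (T.comp 𝒰.adjoint))) x) ∧
    LinearMap.range ((𝒢.comp (Kd.comp (T.comp 𝒰.adjoint))) : H →ₗ[ℝ] H) = G ∧
    LinearMap.ker ((𝒢.comp (Kd.comp (T.comp 𝒰.adjoint))) : H →ₗ[ℝ] H) =
      (G.map ((U.subtypeL.comp (orthogonalProjection U)).toLinearMap))ᗮ := by
  have hranU : LinearMap.range (𝒰 : lp (fun _ : ℕ => ℝ) 2 →ₗ[ℝ] H) = U :=
    frame_range_eq' 𝒰 U hU A hA (fun f hf => (hframeU f hf).1)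
  have hranG : LinearMap.range (𝒢 : lp (fun _ : ℕ => ℝ) 2 →ₗ[ℝ] H) = G :=
    frame_range_eq' 𝒢 G hG C hC (fun f hf => (hframeG f hf).1)
  -- kernel of 𝒰* contains U-perpendicular directions
  have hkerU : ∀ f : H, (∀ u ∈ U, ⟪f, u⟫ = 0) → 𝒰.adjoint f = 0 := by
    intro f hf
    have h1 : ⟪𝒰.adjoint f, 𝒰.adjoint f⟫ = ⟪f, 𝒰 (𝒰.adjoint f)⟫ :=
      ContinuousLinearMap.adjoint_inner_left 𝒰 (𝒰.adjoint f) f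
    have h2 : 𝒰 (𝒰.adjoint f) ∈ U := hranU ▸ ⟨_, rfl⟩
    have h3 : ⟪𝒰.adjoint f, 𝒰.adjoint f⟫ = 0 := by rw [h1]; exact hf _ h2
    exact inner_self_eq_zero.mp h3
  -- 𝒰 Sd 𝒰* is the orthogonal projection onto U
  have hproj : ∀ g : H, 𝒰 (Sd (𝒰.adjoint g)) = (orthogonalProjection U g : H) := by
    intro g
    have hPm : (orthogonalProjection U g : H) ∈ LinearMap.range (𝒰 : lp (fun _ : ℕ => ℝ) 2 →ₗ[ℝ] H) :=
      hranU.symm ▸ (orthogonalProjection U g).2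
    obtain ⟨x, hx⟩ := hPm
    have hperp : g - (orthogonalProjection U g : H) ∈ Uᗮ :=
      sub_starProjection_mem_orthogonal g
    have h1 : 𝒰.adjoint (g - (orthogonalProjection U g : H)) = 0 :=
      hkerU _ ((Submodule.mem_orthogonal' _ _).1 hperp)
    have h2 : 𝒰.adjoint g = 𝒰.adjoint (𝒰 x) := by
      rw [map_sub, sub_eq_zero] at h1
      rw [h1, ← hx, ContinuousLinearMap.coe_coe]
    have h3 : 𝒰.adjoint g ∈ LinearMap.range (𝒰.adjoint.comp 𝒰 : lp (fun _ : ℕ => ℝ) 2 →ₗ[ℝ] lp (fun _ : ℕ => ℝ) 2) := ⟨x, h2.symm⟩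
    have h4 := hSdid _ h3
    -- h4 : 𝒰.adjoint (𝒰 (Sd (𝒰.adjoint g))) = 𝒰.adjoint g
    have h5 : 𝒰.adjoint (g - 𝒰 (Sd (𝒰.adjoint g))) = 0 := by
      rw [map_sub, sub_eq_zero]
      exact h4.symm
    have hqU : 𝒰 (Sd (𝒰.adjoint g)) ∈ U := hranU ▸ ⟨_, rfl⟩
    have horth : ∀ w ∈ U, ⟪g - 𝒰 (Sd (𝒰.adjoint g)), w⟫ = 0 := by
      intro w hw
      rw [← hranU] at hw
      obtain ⟨y, rfl⟩ := hw
      rw [ContinuousLinearMap.coe_coe, ← ContinuousLinearMap.adjoint_inner_left 𝒰, h5, inner_zero_left]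
    exact (eq_starProjection_of_mem_of_inner_eq_zero hqU horth).symm
  have hsymT : ∀ x y, ⟪T x, y⟫ = ⟪x, T y⟫ :=
    fun x y => hTpos.1 x y
  have key : ∀ f g : H, ⟪T (𝒰.adjoint f), T (𝒰.adjoint g)⟫
      = ⟪f, (orthogonalProjection U g : H)⟫ := by
    intro f g
    rw [hsymT]
    have h1 : T (T (𝒰.adjoint g)) = Sd (𝒰.adjoint g) := by
      rw [← ContinuousLinearMap.comp_apply, hTsq]
    rw [h1, ContinuousLinearMap.adjoint_inner_left, hproj]
  have hPsym : ∀ f g : H, ⟪(orthogonalProjection U f : H), g⟫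
      = ⟪f, (orthogonalProjection U g : H)⟫ := by
    intro f g
    rw [real_inner_comm, ← key g f, real_inner_comm, key f g]
  have hnormP : ∀ g : H, ⟪g, (orthogonalProjection U g : H)⟫
      = ‖(orthogonalProjection U g : H)‖ ^ 2 := by
    intro g
    have h1 : ⟪g - (orthogonalProjection U g : H), (orthogonalProjection U g : H)⟫ = 0 :=
      (Submodule.mem_orthogonal' _ _).1 (sub_starProjection_mem_orthogonal g) _
        (orthogonalProjection U g).2
    rw [inner_sub_left] at h1
    rw [← real_inner_self_eq_norm_sq]
    linarith
  -- lower bound from the angle condition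
  have hclow : ∀ g ∈ G, cosAngle G U * ‖g‖ ≤ ‖(orthogonalProjection U g : H)‖ := by
    intro g hg
    rcases eq_or_ne g 0 with rfl | hne
    · simp
    · have hgn : (0 : ℝ) < ‖g‖ := norm_pos_iff.mpr hne
      have hs : (‖g‖⁻¹ • g) ∈ G := G.smul_mem _ hg
      have hns : ‖‖g‖⁻¹ • g‖ = 1 := by
        rw [norm_smul, norm_inv, norm_norm, inv_mul_cancel₀ hgn.ne']
      have hbdd : BddBelow {r : ℝ | ∃ s ∈ G, ‖s‖ = 1 ∧
          r = ‖(orthogonalProjection U s : H)‖} := by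
        refine ⟨0, ?_⟩
        rintro r ⟨s, _, _, rfl⟩
        exact norm_nonneg _
      have hmem : ‖(orthogonalProjection U (‖g‖⁻¹ • g) : H)‖ ∈ {r : ℝ | ∃ s ∈ G, ‖s‖ = 1 ∧
          r = ‖(orthogonalProjection U s : H)‖} := ⟨_, hs, hns, rfl⟩
      have hle := csInf_le hbdd hmem
      have hsimp : ‖(orthogonalProjection U (‖g‖⁻¹ • g) : H)‖
          = ‖g‖⁻¹ * ‖(orthogonalProjection U g : H)‖ := by
        rw [map_smul]
        rw [Submodule.coe_smul, norm_smul, norm_inv, norm_norm]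
      rw [hsimp] at hle
      unfold cosAngle at *
      calc sInf {r : ℝ | ∃ s ∈ G, ‖s‖ = 1 ∧ r = ‖(orthogonalProjection U s : H)‖} * ‖g‖
          ≤ (‖g‖⁻¹ * ‖(orthogonalProjection U g : H)‖) * ‖g‖ := by
            exact mul_le_mul_of_nonneg_right hle (norm_nonneg g)
        _ = ‖(orthogonalProjection U g : H)‖ := by field_simp
  set K := T.comp (𝒰.adjoint.comp 𝒢) with hKdef
  have hKapp : ∀ x, K x = T (𝒰.adjoint (𝒢 x)) := fun x => rfl
  have hmemG : ∀ x, 𝒢 x ∈ G := fun x => hranG ▸ ⟨x, rfl⟩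
  have hkerKG : ∀ x, K x = 0 → 𝒢 x = 0 := by
    intro x hx
    have h1 : ‖(orthogonalProjection U (𝒢 x) : H)‖ ^ 2 = 0 := by
      rw [← hnormP, ← key (𝒢 x) (𝒢 x), ← hKapp, hx, inner_zero_left]
    have h2 := hclow (𝒢 x) (hmemG x)
    have h3 : ‖(orthogonalProjection U (𝒢 x) : H)‖ = 0 := by
      exact pow_eq_zero_iff (two_ne_zero) |>.mp h1
    rw [h3] at h2
    have h4 : ‖𝒢 x‖ ≤ 0 := by nlinarith
    rw [← norm_eq_zero]
    exact le_antisymm h4 (norm_nonneg _)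
  -- basic pseudoinverse manipulations
  have hzero : ∀ z, z ∈ LinearMap.ker (K : lp (fun _ : ℕ => ℝ) 2 →ₗ[ℝ] lp (fun _ : ℕ => ℝ) 2) → z ∈ (LinearMap.ker (K : lp (fun _ : ℕ => ℝ) 2 →ₗ[ℝ] lp (fun _ : ℕ => ℝ) 2))ᗮ → z = 0 := by
    intro z h1 h2
    exact inner_self_eq_zero.mp ((Submodule.mem_orthogonal' _ z).1 h2 z h1)
  have hKdmem : ∀ y, Kd y ∈ (LinearMap.ker (K : lp (fun _ : ℕ => ℝ) 2 →ₗ[ℝ] lp (fun _ : ℕ => ℝ) 2))ᗮ := by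
    intro y
    rw [← hKdran]
    exact ⟨y, rfl⟩
  have hKdK : ∀ x, K (Kd (K x)) = K x := fun x => hKdid _ ⟨x, rfl⟩
  have hKdKd : ∀ y, Kd (K (Kd y)) = Kd y := by
    intro y
    have h2 : Kd (K (Kd y)) - Kd y ∈ LinearMap.ker (K : lp (fun _ : ℕ => ℝ) 2 →ₗ[ℝ] lp (fun _ : ℕ => ℝ) 2) := by
      rw [LinearMap.mem_ker, map_sub, ContinuousLinearMap.coe_coe, hKdK, sub_self]
    have h3 : Kd (K (Kd y)) - Kd y ∈ (LinearMap.ker (K : lp (fun _ : ℕ => ℝ) 2 →ₗ[ℝ] lp (fun _ : ℕ => ℝ) 2))ᗮ :=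
      Submodule.sub_mem _ (hKdmem _) (hKdmem _)
    have := hzero _ h2 h3
    rwa [sub_eq_zero] at this
  have hGKdK : ∀ x, 𝒢 (Kd (K x)) = 𝒢 x := by
    intro x
    have h2 : K (Kd (K x) - x) = 0 := by rw [map_sub, hKdK, sub_self]
    have h3 : 𝒢 (Kd (K x) - x) = 0 := hkerKG _ h2
    rw [map_sub, sub_eq_zero] at h3
    exact h3
  refine ⟨?_, ?_, ?_⟩
  · -- idempotent
    intro x
    simp only [ContinuousLinearMap.comp_apply]
    exact congrArg 𝒢 (hKdKd (T (𝒰.adjoint x)))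
  · -- range
    apply le_antisymm
    · rintro _ ⟨x, rfl⟩
      rw [← hranG]
      exact ⟨Kd (T (𝒰.adjoint x)), rfl⟩
    · intro g hg
      rw [← hranG] at hg
      obtain ⟨x, rfl⟩ := hg
      exact ⟨𝒢 x, hGKdK x⟩
  · -- kernel
    ext x
    rw [LinearMap.mem_ker]
    have hRapp : (𝒢.comp (Kd.comp (T.comp 𝒰.adjoint))) x = 𝒢 (Kd (T (𝒰.adjoint x))) := rfl
    rw [ContinuousLinearMap.coe_coe, hRapp]
    constructor
    · intro h
      have hz : K (Kd (T (𝒰.adjoint x))) = 0 := by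
        rw [hKapp, h, map_zero, map_zero]
      have h0 : Kd (T (𝒰.adjoint x)) = 0 := hzero _ hz (hKdmem _)
      have hker : T (𝒰.adjoint x) ∈ LinearMap.ker (Kd : lp (fun _ : ℕ => ℝ) 2 →ₗ[ℝ] lp (fun _ : ℕ => ℝ) 2) := h0
      rw [hKdker] at hker
      -- hker : T (𝒰.adjoint x) ∈ (range K)ᗮ
      rw [Submodule.mem_orthogonal]
      rintro u hu
      rw [Submodule.mem_map] at hu
      obtain ⟨g, hgG, rfl⟩ := hu
      rw [← hranG] at hgG
      obtain ⟨y, rfl⟩ := hgG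
      have hPg : ((U.subtypeL.comp (orthogonalProjection U)).toLinearMap) (𝒢 y)
          = (orthogonalProjection U (𝒢 y) : H) := rfl
      rw [ContinuousLinearMap.coe_coe 𝒢, hPg, hPsym, ← key (𝒢 y) x]
      exact (Submodule.mem_orthogonal _ _).1 hker _ ⟨y, rfl⟩
    · intro h
      have hker : T (𝒰.adjoint x) ∈ LinearMap.ker (Kd : lp (fun _ : ℕ => ℝ) 2 →ₗ[ℝ] lp (fun _ : ℕ => ℝ) 2) := by
        rw [hKdker, Submodule.mem_orthogonal]
        rintro _ ⟨y, rfl⟩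
        calc ⟪K y, T (𝒰.adjoint x)⟫
            = ⟪(𝒢 y), (orthogonalProjection U x : H)⟫ := key (𝒢 y) x
          _ = ⟪(orthogonalProjection U (𝒢 y) : H), x⟫ := (hPsym (𝒢 y) x).symm
          _ = 0 := (Submodule.mem_orthogonal _ _).1 h _
              (Submodule.mem_map.mpr ⟨𝒢 y, hmemG y, rfl⟩)
      rw [LinearMap.mem_ker, ContinuousLinearMap.coe_coe] at hker
      show 𝒢 (Kd (T (𝒰.adjoint x))) = 0
      rw [hker, map_zero]
end

section
/- Let {u_j}_{j=1}^n and {g_k}_{k=1}^m be finite sequences in a Hilbert space H with synthesis operators 𝒰 and 𝒢, and suppose g_1,…,g_m are linearly independent with span G, and U = span{u_j}. Then cos²(φ_{GU}) = λ_min((𝒢*𝒢)^{-1} 𝒢* 𝒰𝒰† 𝒢), the smallest eigenvalue of (𝒢*𝒢)^{-1}𝒢*𝒰𝒰†𝒢. -/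
open Submodule

lemma aux_unit {E : Type*} [NormedAddCommGroup E] [NormedSpace ℝ E] [FiniteDimensional ℝ E]
    (f : E →L[ℝ] E) (h : Function.Injective f) : Function.Bijective f :=
  ⟨h, LinearMap.injective_iff_surjective (f := f.toLinearMap) |>.mp h⟩

lemma aux_spec {E : Type*} [NormedAddCommGroup E] [InnerProductSpace ℝ E]
    [FiniteDimensional ℝ E] (f : E →L[ℝ] E) (μ : ℝ) :
    μ ∈ spectrum ℝ f ↔ ∃ x, x ≠ 0 ∧ f x = μ • x := by
  have : CompleteSpace E := FiniteDimensional.complete ℝ E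
  rw [spectrum.mem_iff, ContinuousLinearMap.isUnit_iff_bijective]
  have key : ∀ x, (algebraMap ℝ (E →L[ℝ] E) μ - f) x = μ • x - f x := fun x => by
    simp [Algebra.algebraMap_eq_smul_one]
  constructor
  · intro h
    have hni : ¬ Function.Injective (algebraMap ℝ (E →L[ℝ] E) μ - f) :=
      fun hi => h (aux_unit _ hi)
    rw [injective_iff_map_eq_zero] at hni
    push_neg at hni
    obtain ⟨x, hx0, hx⟩ := hni
    exact ⟨x, hx, (sub_eq_zero.mp (key x ▸ hx0)).symm⟩
  · rintro ⟨x, hx, hfx⟩ hb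
    have : (algebraMap ℝ (E →L[ℝ] E) μ - f) x = 0 := by rw [key, hfx, sub_self]
    exact hx (hb.1 (this.trans (map_zero _).symm))

set_option maxHeartbeats 1000000 in
/-- For finite sequences `{u_j}_{j=1}^n` and linearly independent `{g_k}_{k=1}^m` with
synthesis operators `𝒰, 𝒢`, `U = span{u_j}`, `G = span{g_k}`, one has
`cos²(φ_{GU}) = λ_min((𝒢*𝒢)⁻¹ 𝒢* 𝒰𝒰† 𝒢)` (the smallest point of the spectrum), where
`𝒰𝒰† = P_U` is the orthogonal projection onto `U`. -/
theorem stmt19 {H : Type*} [NormedAddCommGroup H] [InnerProductSpace ℝ H] [CompleteSpace H]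
    {n m : ℕ} (u : Fin n → H) (g : Fin m → H) (hg : LinearIndependent ℝ g)
    (𝒰 : EuclideanSpace ℝ (Fin n) →L[ℝ] H) (𝒢 : EuclideanSpace ℝ (Fin m) →L[ℝ] H)
    (h𝒰 : ∀ c, 𝒰 c = ∑ j, c j • u j) (h𝒢 : ∀ c, 𝒢 c = ∑ k, c k • g k)
    (U G : Submodule ℝ H) [CompleteSpace U] [CompleteSpace G]
    (hU : U = Submodule.span ℝ (Set.range u)) (hG : G = Submodule.span ℝ (Set.range g))
    -- `(𝒢*𝒢)⁻¹`:
    (Ginv : EuclideanSpace ℝ (Fin m) →L[ℝ] EuclideanSpace ℝ (Fin m))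
    (hGinv₁ : Ginv.comp (𝒢.adjoint.comp 𝒢) = ContinuousLinearMap.id ℝ _)
    (hGinv₂ : (𝒢.adjoint.comp 𝒢).comp Ginv = ContinuousLinearMap.id ℝ _) :
    cosAngle G U ^ 2 =
      sInf (spectrum ℝ (Ginv.comp (𝒢.adjoint.comp
        ((U.subtypeL.comp (orthogonalProjection U)).comp 𝒢)))) := by
  classical
  rcases Nat.eq_zero_or_pos m with hm | hm
  · -- trivial case `m = 0`
    subst hm
    have hGbot : G = ⊥ := by
      rw [hG]
      simp [Set.range_eq_empty]
    have h1 : {r : ℝ | ∃ s ∈ G, ‖s‖ = 1 ∧ r = ‖(orthogonalProjection U s : H)‖} = ∅ := by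
      ext r
      simp only [Set.mem_setOf_eq, Set.mem_empty_iff_false, iff_false, not_exists]
      rintro s ⟨hs, hs1, -⟩
      rw [hGbot, Submodule.mem_bot] at hs
      subst hs
      simp at hs1
    have h2 : ∀ x : EuclideanSpace ℝ (Fin 0), x = 0 := fun x => by ext i; exact i.elim0
    have h3 : spectrum ℝ (Ginv.comp (𝒢.adjoint.comp
        ((U.subtypeL.comp (orthogonalProjection U)).comp 𝒢))) = ∅ := by
      ext μ
      simp only [spectrum.mem_iff, Set.mem_empty_iff_false, iff_false, not_not]
      have : (algebraMap ℝ (EuclideanSpace ℝ (Fin 0) →L[ℝ] EuclideanSpace ℝ (Fin 0)) μ -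
          Ginv.comp (𝒢.adjoint.comp
          ((U.subtypeL.comp (orthogonalProjection U)).comp 𝒢))) = 1 := by
        ext c i
        exact i.elim0
      rw [this]
      exact isUnit_one
    rw [cosAngle, h1, h3, Real.sInf_empty]
    norm_num
  · -- main case `0 < m`
    set P : H →L[ℝ] H := U.subtypeL.comp (orthogonalProjection U) with hPdef
    set T : EuclideanSpace ℝ (Fin m) →L[ℝ] EuclideanSpace ℝ (Fin m) :=
      Ginv.comp (𝒢.adjoint.comp (P.comp 𝒢)) with hTdef
    have hPapp : ∀ x : H, P x = (orthogonalProjection U x : H) := fun x => rfl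
    haveI : FiniteDimensional ℝ G := by
      rw [hG]
      exact FiniteDimensional.span_of_finite ℝ (Set.finite_range g)
    -- membership facts
    have hmem : ∀ c, 𝒢 c ∈ G := by
      intro c
      rw [h𝒢, hG]
      exact sum_mem fun k _ => smul_mem _ _ (subset_span ⟨k, rfl⟩)
    have hgk : ∀ k, 𝒢 (EuclideanSpace.single k (1 : ℝ)) = g k := by
      intro k
      rw [h𝒢]
      simp [EuclideanSpace.single_apply, ite_smul]
    have hsurj : ∀ x ∈ G, ∃ c, 𝒢 c = x := by
      intro x hx
      have hle : G ≤ LinearMap.range (𝒢 : EuclideanSpace ℝ (Fin m) →ₗ[ℝ] H) := by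
        rw [hG, Submodule.span_le]
        rintro y ⟨k, rfl⟩
        exact ⟨EuclideanSpace.single k (1 : ℝ), hgk k⟩
      exact hle hx
    have hinj0 : ∀ c, 𝒢 c = 0 → c = 0 := by
      intro c hc
      have h0 : ∑ k, c k • g k = 0 := by rw [← h𝒢]; exact hc
      have := Fintype.linearIndependent_iff.mp hg c h0
      ext i; exact this i
    have hinj : Function.Injective 𝒢 := by
      intro a b hab
      have := hinj0 (a - b) (by rw [map_sub, hab, sub_self])
      rwa [sub_eq_zero] at this
    -- the projection identity 𝒢 (𝒢*𝒢)⁻¹ 𝒢* = P_G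
    have hproj : ∀ x : H, (orthogonalProjection G x : H) = 𝒢 (Ginv (𝒢.adjoint x)) := by
      intro x
      refine (eq_starProjection_of_mem_of_inner_eq_zero (hmem _) ?_ : G.starProjection x = _)
      intro w hw
      obtain ⟨d, rfl⟩ := hsurj w hw
      have h1 : 𝒢.adjoint (𝒢 (Ginv (𝒢.adjoint x))) = 𝒢.adjoint x := by
        simpa using congrFun (congrArg DFunLike.coe hGinv₂) (𝒢.adjoint x)
      have h2 : (inner ℝ (x - 𝒢 (Ginv (𝒢.adjoint x))) (𝒢 d) : ℝ) =
          inner ℝ (𝒢.adjoint (x - 𝒢 (Ginv (𝒢.adjoint x)))) d :=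
        (ContinuousLinearMap.adjoint_inner_left 𝒢 d _).symm
      rw [h2, map_sub, h1, sub_self]
      simp
    -- basic facts about P
    have hPsym : ∀ x y : H, (inner ℝ (P x) y : ℝ) = inner ℝ x (P y) := fun x y =>
      inner_starProjection_left_eq_right U x y
    have hPnorm : ∀ x : H, (inner ℝ (P x) x : ℝ) = ‖P x‖ ^ 2 := by
      intro x
      have h0 : (inner ℝ (x - P x) (P x) : ℝ) = 0 :=
        starProjection_inner_eq_zero x _ (Submodule.coe_mem _)
      have h1 : (inner ℝ (P x) (x - P x) : ℝ) = 0 := by rw [real_inner_comm]; exact h0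
      have h2 : (inner ℝ (P x) x : ℝ) - inner ℝ (P x) (P x) = 0 := by
        rw [← inner_sub_right]; exact h1
      rw [sub_eq_zero] at h2
      rw [h2, real_inner_self_eq_norm_sq]
    -- the compressed operator S on G
    set S : G →L[ℝ] G := (orthogonalProjection G).comp (P.comp G.subtypeL) with hSdef
    have hScoe : ∀ x : G, (S x : H) = (orthogonalProjection G (P ↑x) : H) := fun x => rfl
    have hSinner : ∀ x y : G, (inner ℝ (S x) y : ℝ) = inner ℝ (P ↑x) (↑y : H) := fun x y =>
      inner_orthogonalProjectionOnto_eq_of_mem_right y (P ↑x)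
    have hSym : (S : G →ₗ[ℝ] G).IsSymmetric := by
      intro x y
      show (inner ℝ (S x) y : ℝ) = inner ℝ x (S y)
      calc (inner ℝ (S x) y : ℝ) = inner ℝ (P ↑x) (↑y : H) := hSinner x y
        _ = inner ℝ (↑x : H) (P ↑y) := hPsym ↑x ↑y
        _ = inner ℝ (P ↑y) (↑x : H) := (real_inner_comm _ _).symm
        _ = inner ℝ (S y) x := (hSinner y x).symm
        _ = inner ℝ x (S y) := (real_inner_comm _ _).symm
    -- nontriviality of G
    have hg0 : g ⟨0, hm⟩ ≠ 0 := hg.ne_zero _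
    have hg0G : g ⟨0, hm⟩ ∈ G := by rw [hG]; exact subset_span ⟨_, rfl⟩
    haveI : Nontrivial G :=
      ⟨⟨⟨g ⟨0, hm⟩, hg0G⟩, 0, fun h => hg0 (congrArg Subtype.val h)⟩⟩
    -- the spectra of T and S coincide
    have hspec : spectrum ℝ T = spectrum ℝ S := by
      ext μ
      rw [aux_spec, aux_spec]
      constructor
      · rintro ⟨c, hc, hTc⟩
        refine ⟨⟨𝒢 c, hmem c⟩, fun h => hc (hinj0 c (congrArg Subtype.val h)), ?_⟩
        apply Subtype.ext
        show (orthogonalProjection G (P (𝒢 c)) : H) = μ • 𝒢 c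
        rw [hproj]
        have h1 : Ginv (𝒢.adjoint (P (𝒢 c))) = T c := rfl
        rw [h1, hTc, map_smul]
      · rintro ⟨s, hs, hSs⟩
        obtain ⟨c, hc⟩ := hsurj ↑s s.2
        refine ⟨c, fun h => hs (Subtype.ext (by rw [← hc, h, map_zero]; simp)), ?_⟩
        apply hinj
        have h1 : 𝒢 (T c) = (orthogonalProjection G (P (𝒢 c)) : H) := (hproj _).symm
        rw [map_smul, hc, h1, hc]
        have := congrArg Subtype.val hSs
        rw [hScoe] at this
        simpa using this
    -- every spectral point of S is `‖P s‖²` for a unit vector `s ∈ G`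
    have specS_sub : ∀ μ' ∈ spectrum ℝ S,
        ∃ s ∈ G, ‖s‖ = 1 ∧ μ' = ‖(orthogonalProjection U s : H)‖ ^ 2 := by
      intro μ' hμ'
      obtain ⟨v, hv, hSv⟩ := (aux_spec S μ').mp hμ'
      have hvn : ‖v‖ ≠ 0 := fun h => hv (norm_eq_zero.mp h)
      set s : G := ‖v‖⁻¹ • v with hsdef
      have hs1 : ‖s‖ = 1 := by
        rw [hsdef, norm_smul, norm_inv, norm_norm, inv_mul_cancel₀ hvn]
      have hSs : S s = μ' • s := by
        rw [hsdef, map_smul, hSv, smul_comm]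
      have h1 : (inner ℝ (S s) s : ℝ) = μ' := by
        rw [hSs, real_inner_smul_left, real_inner_self_eq_norm_sq, hs1]
        ring
      have h2 : (inner ℝ (S s) s : ℝ) = ‖P ↑s‖ ^ 2 := by rw [hSinner, hPnorm]
      refine ⟨↑s, s.2, ?_, ?_⟩
      · rw [Submodule.norm_coe]; exact hs1
      · rw [← hPapp, ← h2, h1]
    -- the Rayleigh infimum
    set μ : ℝ := ⨅ x : { x : G // x ≠ 0 },
      RCLike.re (inner ℝ ((S : G →ₗ[ℝ] G) ↑x) (↑x : G) : ℝ) / ‖(x : G)‖ ^ 2 with hμdef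
    have hray : ∀ x : { x : G // x ≠ 0 },
        RCLike.re (inner ℝ ((S : G →ₗ[ℝ] G) ↑x) (↑x : G) : ℝ) / ‖(x : G)‖ ^ 2 =
        ‖P ↑(x : G)‖ ^ 2 / ‖(x : G)‖ ^ 2 := by
      intro x
      congr 1
      show RCLike.re (inner ℝ (S ↑x) (↑x : G) : ℝ) = _
      rw [RCLike.re_to_real, hSinner, hPnorm]
    have hbdd : BddBelow (Set.range fun x : { x : G // x ≠ 0 } =>
        RCLike.re (inner ℝ ((S : G →ₗ[ℝ] G) ↑x) (↑x : G) : ℝ) / ‖(x : G)‖ ^ 2) := by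
      refine ⟨0, ?_⟩
      rintro r ⟨x, rfl⟩
      dsimp only
      rw [hray]
      positivity
    have hμmem : μ ∈ spectrum ℝ S := by
      have hEig := hSym.hasEigenvalue_iInf_of_finiteDimensional
      obtain ⟨v, hv⟩ := hEig.exists_hasEigenvector
      rw [aux_spec]
      refine ⟨v, hv.2, ?_⟩
      have := hv.apply_eq_smul
      simpa [hμdef] using this
    have hμle : ∀ s ∈ G, ‖s‖ = 1 → μ ≤ ‖(orthogonalProjection U s : H)‖ ^ 2 := by
      intro s hsG hs1
      have hne : (⟨s, hsG⟩ : G) ≠ 0 := by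
        intro h
        have : s = 0 := congrArg Subtype.val h
        rw [this] at hs1; simp at hs1
      have := ciInf_le hbdd (⟨⟨s, hsG⟩, hne⟩ : { x : G // x ≠ 0 })
      rw [hray] at this
      have hns : ‖(⟨s, hsG⟩ : G)‖ = 1 := hs1
      rw [hns] at this
      rw [hμdef]
      simpa [hPapp] using this
    -- assembling
    set A := {r : ℝ | ∃ s ∈ G, ‖s‖ = 1 ∧ r = ‖(orthogonalProjection U s : H)‖} with hAdef
    have hAne : A.Nonempty := by
      refine ⟨‖(orthogonalProjection U (‖g ⟨0, hm⟩‖⁻¹ • g ⟨0, hm⟩) : H)‖,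
        ‖g ⟨0, hm⟩‖⁻¹ • g ⟨0, hm⟩, smul_mem _ _ hg0G, ?_, rfl⟩
      rw [norm_smul, norm_inv, norm_norm, inv_mul_cancel₀ (fun h => hg0 (norm_eq_zero.mp h))]
    have hAbdd : BddBelow A := ⟨0, by rintro r ⟨s, _, _, rfl⟩; positivity⟩
    have hA0 : 0 ≤ sInf A := Real.sInf_nonneg (by rintro r ⟨s, _, _, rfl⟩; positivity)
    have hca : cosAngle G U = sInf A := rfl
    have hspecne : (spectrum ℝ S).Nonempty := ⟨μ, hμmem⟩
    have hμ0 : 0 ≤ μ := by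
      obtain ⟨s, _, _, hs⟩ := specS_sub μ hμmem
      rw [hs]; positivity
    have hspecbdd : BddBelow (spectrum ℝ S) := by
      refine ⟨0, fun b hb => ?_⟩
      obtain ⟨s, _, _, hs⟩ := specS_sub b hb
      rw [hs]; positivity
    rw [hca, hspec]
    apply le_antisymm
    · apply le_csInf hspecne
      intro b hb
      obtain ⟨s, hsG, hs1, hs⟩ := specS_sub b hb
      have h1 : sInf A ≤ ‖(orthogonalProjection U s : H)‖ :=
        csInf_le hAbdd ⟨s, hsG, hs1, rfl⟩
      rw [hs]
      exact pow_le_pow_left₀ hA0 h1 2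
    · have h1 : sInf (spectrum ℝ S) ≤ μ := csInf_le hspecbdd hμmem
      have h2 : Real.sqrt μ ≤ sInf A := by
        apply le_csInf hAne
        rintro r ⟨s, hsG, hs1, rfl⟩
        have := hμle s hsG hs1
        calc Real.sqrt μ ≤ Real.sqrt (‖(orthogonalProjection U s : H)‖ ^ 2) :=
              Real.sqrt_le_sqrt this
          _ = ‖(orthogonalProjection U s : H)‖ := Real.sqrt_sq (norm_nonneg _)
      have h3 : μ ≤ sInf A ^ 2 := by
        calc μ = Real.sqrt μ ^ 2 := (Real.sq_sqrt hμ0).symm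
          _ ≤ sInf A ^ 2 := pow_le_pow_left₀ (Real.sqrt_nonneg _) h2 2
      linarith
end
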